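/- arXiv:2109.01897 — 8 statements merged into one kernel-verified Lean document; each statement's English description precedes it below -/
import Mathlib

section
/- In the multi-species batch model, for two distinct species i ≠ j and any particles k of species i and ℓ of species j, the probability that (i,k) and (j,ℓ) lie in the same super-batch, i.e. that a_i(k) = a_j(ℓ), equals min{b_i, b_j}/(b_i · b_j). -/
open Finset Equiv Nat

private lemma div_eq_iff' {pq t x : ℕ} (hp : 0 < pq) :
    x / pq = t ↔ t * pq ≤ x ∧ x < (t + 1) * pq := by
  constructor
  · rintro rfl
    exact ⟨Nat.div_mul_le_self x pq, (Nat.div_lt_iff_lt_mul hp).mp (Nat.lt_succ_self _)⟩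
  · rintro ⟨h1, h2⟩
    exact le_antisymm (Nat.lt_succ_iff.mp ((Nat.div_lt_iff_lt_mul hp).mpr h2))
      ((Nat.le_div_iff_mul_le hp).mpr h1)

private lemma div_fiber_card (bq pq t : ℕ) (hp : 0 < pq) (ht : t < bq) :
    (Finset.univ.filter fun x : Fin (bq * pq) => (x : ℕ) / pq = t).card = pq := by
  have : (Finset.univ.filter fun x : Fin (bq * pq) => (x : ℕ) / pq = t).card
      = ((Finset.range (bq * pq)).filter fun x => x / pq = t).card := by
    refine Finset.card_bij (fun x _ => (x : ℕ)) ?_ ?_ ?_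
    · intro x hx
      simp only [Finset.mem_filter, Finset.mem_univ, true_and] at hx
      simp [Finset.mem_filter, Finset.mem_range, x.isLt, hx]
    · intro x _ y _ h; exact Fin.val_injective h
    · intro y hy
      simp only [Finset.mem_filter, Finset.mem_range] at hy
      exact ⟨⟨y, hy.1⟩, by simp [hy.2], rfl⟩
  rw [this]
  have : ((Finset.range (bq * pq)).filter fun x => x / pq = t) =
      Finset.Ico (t * pq) ((t + 1) * pq) := by
    ext a
    simp only [Finset.mem_filter, Finset.mem_range, Finset.mem_Ico, div_eq_iff' hp]
    constructor
    · rintro ⟨_, h⟩; exact h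
    · rintro ⟨h1, h2⟩
      exact ⟨lt_of_lt_of_le h2 (Nat.mul_le_mul_right _ ht), h1, h2⟩
  rw [this, Nat.card_Ico]
  ring_nf
  omega

private lemma tset_count (bi pi bj pj : ℕ) (hpi : 0 < pi) (hpj : 0 < pj) :
    (Finset.univ.filter fun xy : Fin (bi * pi) × Fin (bj * pj) =>
        (xy.1 : ℕ) / pi = (xy.2 : ℕ) / pj).card = min bi bj * (pi * pj) := by
  rw [Finset.card_eq_sum_card_fiberwise
    (f := fun xy : Fin (bi * pi) × Fin (bj * pj) => (xy.1 : ℕ) / pi)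
    (t := Finset.range (min bi bj)) (by
      intro xy hxy
      simp only [Finset.mem_coe, Finset.mem_filter, Finset.mem_univ, true_and] at hxy
      simp only [Finset.mem_coe, Finset.mem_range, lt_min_iff]
      constructor
      · exact (Nat.div_lt_iff_lt_mul hpi).mpr xy.1.isLt
      · rw [hxy]; exact (Nat.div_lt_iff_lt_mul hpj).mpr xy.2.isLt)]
  have key : ∀ t ∈ Finset.range (min bi bj),
      ((Finset.univ.filter fun xy : Fin (bi * pi) × Fin (bj * pj) =>
          (xy.1 : ℕ) / pi = (xy.2 : ℕ) / pj).filter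
        fun xy => (xy.1 : ℕ) / pi = t).card = pi * pj := by
    intro t ht
    simp only [Finset.mem_range, lt_min_iff] at ht
    have : ((Finset.univ.filter fun xy : Fin (bi * pi) × Fin (bj * pj) =>
          (xy.1 : ℕ) / pi = (xy.2 : ℕ) / pj).filter fun xy => (xy.1 : ℕ) / pi = t)
        = (Finset.univ.filter fun x : Fin (bi * pi) => (x : ℕ) / pi = t) ×ˢ
          (Finset.univ.filter fun y : Fin (bj * pj) => (y : ℕ) / pj = t) := by
      rw [← Finset.filter_product]
      rw [Finset.filter_filter]
      ext xy
      simp only [Finset.mem_filter, Finset.univ_product_univ, Finset.mem_univ, true_and]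
      constructor
      · rintro ⟨h1, h2⟩; exact ⟨h2, h2 ▸ h1.symm⟩
      · rintro ⟨h1, h2⟩; exact ⟨h1.trans h2.symm, h1⟩
    rw [this, Finset.card_product, div_fiber_card _ _ _ hpi ht.1,
      div_fiber_card _ _ _ hpj ht.2]
  rw [Finset.sum_congr rfl key, Finset.sum_const, Finset.card_range, smul_eq_mul]

/-- fiber of a product over the first coordinate -/
private def prodFstFiber {α β : Type*} (x : α) : {q : α × β // q.1 = x} ≃ β where
  toFun q := q.1.2
  invFun b := ⟨(x, b), rfl⟩
  left_inv := by rintro ⟨⟨a, b⟩, rfl⟩; rfl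
  right_inv b := rfl

private lemma perm_fixval_card (M : ℕ) (hM : 0 < M) (k x : Fin M) :
    (Finset.univ.filter fun σ : Equiv.Perm (Fin M) => σ k = x).card = (M - 1)! := by
  obtain ⟨M', rfl⟩ : ∃ M', M = M' + 1 := ⟨M - 1, by omega⟩
  simp only [Nat.add_sub_cancel]
  rw [← Fintype.card_subtype]
  have hcp : Fintype.card (Equiv.Perm (Fin M')) = M' ! := by
    rw [Fintype.card_perm, Fintype.card_fin]
  rw [← hcp]
  have decfst : ∀ τ : Equiv.Perm (Fin (M' + 1)), (Equiv.Perm.decomposeFin τ).1 = τ 0 := by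
    intro τ
    have := Equiv.Perm.decomposeFin_symm_apply_zero (Equiv.Perm.decomposeFin τ).1
      (Equiv.Perm.decomposeFin τ).2
    rw [Prod.mk.eta, Equiv.symm_apply_apply] at this
    exact this.symm
  apply Fintype.card_congr
  refine (Equiv.subtypeEquiv
    (((Equiv.mulRight (Equiv.swap 0 k)).trans (Equiv.mulLeft (Equiv.swap x 0))).trans
      Equiv.Perm.decomposeFin) ?_).trans (prodFstFiber 0)
  intro σ
  simp only [Equiv.trans_apply, Equiv.coe_mulRight, Equiv.coe_mulLeft, decfst,
    Equiv.Perm.coe_mul, Function.comp_apply, Equiv.swap_apply_left]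
  constructor
  · intro h; rw [h]; exact Equiv.swap_apply_left x 0
  · intro h
    have := (Equiv.swap x 0).injective (h.trans (Equiv.swap_apply_left x 0).symm)
    exact this

private lemma pair_count (Ni Nj bi pi bj pj : ℕ) (hNi : Ni = bi * pi) (hNj : Nj = bj * pj)
    (hpi : 0 < pi) (hpj : 0 < pj) (k : Fin Ni) (ℓ : Fin Nj) :
    (Finset.univ.filter fun στ : Equiv.Perm (Fin Ni) × Equiv.Perm (Fin Nj) =>
        ((στ.1 k : ℕ) / pi = (στ.2 ℓ : ℕ) / pj)).card
      = min bi bj * (pi * pj) * ((Ni - 1)! * (Nj - 1)!) := by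
  subst hNi hNj
  have hbi : 0 < bi := by
    rcases Nat.eq_zero_or_pos bi with h | h
    · exact absurd (h ▸ k).isLt (by simp [h])
    · exact h
  have hbj : 0 < bj := by
    rcases Nat.eq_zero_or_pos bj with h | h
    · exact absurd (h ▸ ℓ).isLt (by simp [h])
    · exact h
  rw [Finset.card_eq_sum_card_fiberwise
    (f := fun στ : Equiv.Perm (Fin (bi * pi)) × Equiv.Perm (Fin (bj * pj)) =>
      ((στ.1 k, στ.2 ℓ) : Fin (bi * pi) × Fin (bj * pj)))
    (t := Finset.univ.filter fun xy : Fin (bi * pi) × Fin (bj * pj) =>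
      (xy.1 : ℕ) / pi = (xy.2 : ℕ) / pj) (by
      intro στ hστ
      simp only [Finset.mem_coe, Finset.mem_filter, Finset.mem_univ, true_and] at hστ ⊢
      exact hστ)]
  have key : ∀ xy ∈ (Finset.univ.filter fun xy : Fin (bi * pi) × Fin (bj * pj) =>
      (xy.1 : ℕ) / pi = (xy.2 : ℕ) / pj),
      ((Finset.univ.filter fun στ : Equiv.Perm (Fin (bi * pi)) × Equiv.Perm (Fin (bj * pj)) =>
          ((στ.1 k : ℕ) / pi = (στ.2 ℓ : ℕ) / pj)).filter
        fun στ => (στ.1 k, στ.2 ℓ) = xy).card = (bi * pi - 1)! * ((bj * pj - 1)!) := by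
    intro xy hxy
    simp only [Finset.mem_filter, Finset.mem_univ, true_and] at hxy
    have : ((Finset.univ.filter fun στ : Equiv.Perm (Fin (bi * pi)) × Equiv.Perm (Fin (bj * pj)) =>
          ((στ.1 k : ℕ) / pi = (στ.2 ℓ : ℕ) / pj)).filter fun στ => (στ.1 k, στ.2 ℓ) = xy)
        = (Finset.univ.filter fun σ : Equiv.Perm (Fin (bi * pi)) => σ k = xy.1) ×ˢ
          (Finset.univ.filter fun τ : Equiv.Perm (Fin (bj * pj)) => τ ℓ = xy.2) := by
      rw [← Finset.filter_product, Finset.filter_filter]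
      ext στ
      simp only [Finset.mem_filter, Finset.univ_product_univ, Finset.mem_univ, true_and,
        Prod.ext_iff]
      constructor
      · rintro ⟨_, h2, h3⟩; exact ⟨h2, h3⟩
      · rintro ⟨h1, h2⟩; exact ⟨by rw [h1, h2, hxy], h1, h2⟩
    rw [this, Finset.card_product,
      perm_fixval_card _ (Nat.mul_pos hbi hpi) k xy.1,
      perm_fixval_card _ (Nat.mul_pos hbj hpj) ℓ xy.2]
  rw [Finset.sum_congr rfl key, Finset.sum_const, smul_eq_mul,
    tset_count bi pi bj pj hpi hpj]

/-- splitting a subtype of a triple product whose condition only involves the first two -/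
private def tripleSplit {A B C : Type*} (P : A → B → Prop) :
    {q : A × B × C // P q.1 q.2.1} ≃ {ab : A × B // P ab.1 ab.2} × C where
  toFun q := (⟨(q.1.1, q.1.2.1), q.2⟩, q.1.2.2)
  invFun r := ⟨(r.1.1.1, (r.1.1.2, r.2)), r.1.2⟩
  left_inv := by rintro ⟨⟨a, b, c⟩, h⟩; rfl
  right_inv := by rintro ⟨⟨⟨a, b⟩, h⟩, c⟩; rfl

/-- In the multi-species batch model (independent uniform
permutations `σ i` of `Fin (N i)`, batch index of particle `k` of species `i`
being `⌊σ i k / p i⌋`), for two distinct species `i ≠ j`, the probability that a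
particle `k` of species `i` and a particle `ℓ` of species `j` lie in the same
super-batch equals `min (b i) (b j) / (b i * b j)`. -/
theorem cross_species_same_superbatch_prob
    (n : ℕ) (hn : 2 ≤ n) (b p N : Fin n → ℕ)
    (hb : ∀ m, 1 ≤ b m) (hp : ∀ m, 2 ≤ p m) (hN : ∀ m, N m = b m * p m)
    (i j : Fin n) (hij : i ≠ j) (k : Fin (N i)) (ℓ : Fin (N j)) :
    ((Finset.univ.filter (fun σ : ∀ m : Fin n, Equiv.Perm (Fin (N m)) =>
        (σ i k : ℕ) / p i = (σ j ℓ : ℕ) / p j)).card : ℝ) /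
      (Fintype.card (∀ m : Fin n, Equiv.Perm (Fin (N m))) : ℝ)
    = (min (b i) (b j) : ℝ) / ((b i : ℝ) * (b j : ℝ)) := by
  classical
  have hji : j ≠ i := hij.symm
  set C := ∀ m : {m' : {m // m ≠ i} // m' ≠ ⟨j, hji⟩}, Equiv.Perm (Fin (N m.1.1)) with hC
  let E : (∀ m, Equiv.Perm (Fin (N m))) ≃ Equiv.Perm (Fin (N i)) × (Equiv.Perm (Fin (N j)) × C) :=
    (Equiv.piSplitAt i (fun m => Equiv.Perm (Fin (N m)))).trans
      (Equiv.prodCongr (Equiv.refl _)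
        (Equiv.piSplitAt (⟨j, hji⟩ : {m // m ≠ i}) (fun m' => Equiv.Perm (Fin (N m'.1)))))
  -- card of the filter
  have hcard : (Finset.univ.filter (fun σ : ∀ m : Fin n, Equiv.Perm (Fin (N m)) =>
        (σ i k : ℕ) / p i = (σ j ℓ : ℕ) / p j)).card
      = (Finset.univ.filter fun στ : Equiv.Perm (Fin (N i)) × Equiv.Perm (Fin (N j)) =>
          ((στ.1 k : ℕ) / p i = (στ.2 ℓ : ℕ) / p j)).card * Fintype.card C := by
    rw [← Fintype.card_subtype, ← Fintype.card_subtype, ← Fintype.card_prod]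
    apply Fintype.card_congr
    exact (Equiv.subtypeEquiv E (fun σ => Iff.rfl)).trans
      (tripleSplit (fun (σ : Equiv.Perm (Fin (N i))) (τ : Equiv.Perm (Fin (N j))) =>
        (σ k : ℕ) / p i = (τ ℓ : ℕ) / p j))
  -- total card
  have htotal : Fintype.card (∀ m : Fin n, Equiv.Perm (Fin (N m)))
      = (Fintype.card (Equiv.Perm (Fin (N i))) * Fintype.card (Equiv.Perm (Fin (N j))))
        * Fintype.card C := by
    rw [Fintype.card_congr E, Fintype.card_prod, Fintype.card_prod]
    ring
  have hpi : 0 < p i := lt_of_lt_of_le two_pos (hp i)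
  have hpj : 0 < p j := lt_of_lt_of_le two_pos (hp j)
  have hbi : 0 < b i := hb i
  have hbj : 0 < b j := hb j
  have hNi : 0 < N i := by rw [hN i]; exact Nat.mul_pos hbi hpi
  have hNj : 0 < N j := by rw [hN j]; exact Nat.mul_pos hbj hpj
  rw [hcard, htotal, pair_count (N i) (N j) (b i) (p i) (b j) (p j) (hN i) (hN j) hpi hpj k ℓ,
    Fintype.card_perm, Fintype.card_perm, Fintype.card_fin, Fintype.card_fin]
  have hCpos : (0 : ℝ) < Fintype.card C := by
    have : 0 < Fintype.card C := Fintype.card_pos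
    exact_mod_cast this
  have hfi : (N i)! = N i * (N i - 1)! := (Nat.mul_factorial_pred hNi.ne').symm
  have hfj : (N j)! = N j * (N j - 1)! := (Nat.mul_factorial_pred hNj.ne').symm
  rw [hfi, hfj, hN i, hN j]
  push_cast
  have h1 : ((N i - 1)! : ℝ) ≠ 0 := Nat.cast_ne_zero.mpr (Nat.factorial_ne_zero _)
  have h2 : ((N j - 1)! : ℝ) ≠ 0 := Nat.cast_ne_zero.mpr (Nat.factorial_ne_zero _)
  field_simp
end

section
/- In the multi-species batch model, for three pairwise distinct species i, j, j' and particles k of species i, ℓ of species j, ℓ' of species j', the probability of the joint event a_i(k) = a_j(ℓ) and a_i(k) = a_{j'}(ℓ') equals min{b_i, b_j, b_{j'}}/(b_i · b_j · b_{j'}). -/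
open Finset

set_option maxHeartbeats 2000000

-- all fibers of evaluation at a point have the same cardinality
lemma fib_eq (M : ℕ) (x y z : Fin M) :
    (univ.filter fun σ : Equiv.Perm (Fin M) => σ x = y).card
      = (univ.filter fun σ : Equiv.Perm (Fin M) => σ x = z).card := by
  apply Finset.card_bij' (fun σ _ => Equiv.swap y z * σ) (fun σ _ => Equiv.swap y z * σ)
  · intro σ hσ
    simp only [mem_filter, mem_univ, true_and] at hσ ⊢
    simp [hσ]
  · intro σ hσ
    simp only [mem_filter, mem_univ, true_and] at hσ ⊢
    simp [hσ]
  · intro σ _; ext w; simp [Equiv.swap_apply_self]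
  · intro σ _; ext w; simp [Equiv.swap_apply_self]

-- counting permutations whose value at x satisfies Q
lemma card_eval (M : ℕ) (x : Fin M) (Q : Fin M → Prop) [DecidablePred Q] :
    (univ.filter fun σ : Equiv.Perm (Fin M) => Q (σ x)).card * M
      = (univ.filter Q).card * Fintype.card (Equiv.Perm (Fin M)) := by
  classical
  have htot : (Finset.univ : Finset (Equiv.Perm (Fin M))).card
      = ∑ z : Fin M, (univ.filter fun σ : Equiv.Perm (Fin M) => σ x = z).card :=
    Finset.card_eq_sum_card_fiberwise (f := fun σ : Equiv.Perm (Fin M) => σ x) (fun σ _ => Finset.mem_coe.2 (mem_univ _))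
  have hfib : ∀ y : Fin M,
      (univ.filter fun σ : Equiv.Perm (Fin M) => σ x = y).card * M
        = Fintype.card (Equiv.Perm (Fin M)) := by
    intro y
    rw [← Finset.card_univ, htot]
    calc (univ.filter fun σ : Equiv.Perm (Fin M) => σ x = y).card * M
        = ∑ _z : Fin M, (univ.filter fun σ : Equiv.Perm (Fin M) => σ x = y).card := by
          simp [mul_comm]
      _ = ∑ z : Fin M, (univ.filter fun σ : Equiv.Perm (Fin M) => σ x = z).card :=
          Finset.sum_congr rfl fun z _ => fib_eq M x y z
  rw [Finset.card_eq_sum_card_fiberwise (f := fun σ => σ x) (t := univ.filter Q)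
    (fun σ hσ => by simpa using (mem_filter.mp hσ).2)]
  rw [Finset.sum_mul]
  calc ∑ y ∈ univ.filter Q,
        ((univ.filter fun σ : Equiv.Perm (Fin M) => Q (σ x)).filter
          (fun σ => σ x = y)).card * M
      = ∑ _y ∈ univ.filter Q, Fintype.card (Equiv.Perm (Fin M)) := by
        refine Finset.sum_congr rfl fun y hy => ?_
        have hQy : Q y := (mem_filter.mp hy).2
        rw [Finset.filter_filter]
        have hff : (univ.filter fun σ : Equiv.Perm (Fin M) => Q (σ x) ∧ σ x = y)
            = univ.filter fun σ : Equiv.Perm (Fin M) => σ x = y := by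
          apply Finset.filter_congr
          intro σ _
          constructor
          · exact fun h => h.2
          · exact fun h => ⟨h ▸ hQy, h⟩
        rw [hff, hfib]
    _ = (univ.filter Q).card * Fintype.card (Equiv.Perm (Fin M)) := by
        simp [Finset.sum_const, mul_comm]

-- counting elements of Fin M with given quotient
lemma card_div_eq (M bb pp t : ℕ) (hM : M = bb * pp) (hpp : 0 < pp) :
    (univ.filter fun y : Fin M => (y : ℕ) / pp = t).card = if t < bb then pp else 0 := by
  subst hM
  have h1 : (univ.filter fun y : Fin (bb * pp) => (y : ℕ) / pp = t).card
      = ((range (bb * pp)).filter fun y => y / pp = t).card := by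
    rw [Finset.card_filter, Finset.card_filter,
      ← Fin.sum_univ_eq_sum_range (fun y => if y / pp = t then 1 else 0)]
  rw [h1]
  split
  · next ht =>
    have h2 : ((range (bb * pp)).filter fun y => y / pp = t)
        = Finset.Ico (t * pp) (t * pp + pp) := by
      ext y
      simp only [mem_filter, mem_range, Finset.mem_Ico]
      constructor
      · rintro ⟨hy, rfl⟩
        refine ⟨Nat.div_mul_le_self y pp, ?_⟩
        have h3 := Nat.div_add_mod y pp
        have h4 := Nat.mod_lt y hpp
        have h5 : y < pp * (y / pp) + pp := by
          conv_lhs => rw [← h3]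
          exact Nat.add_lt_add_left h4 _
        rwa [Nat.mul_comm] at h5
      · rintro ⟨h3, h4⟩
        have hdiv : y / pp = t := by
          have hle : t ≤ y / pp := (Nat.le_div_iff_mul_le hpp).mpr h3
          have hlt : y / pp < t + 1 := (Nat.div_lt_iff_lt_mul hpp).mpr
            (by rw [Nat.add_mul, Nat.one_mul]; exact h4)
          omega
        refine ⟨?_, hdiv⟩
        have h6 : t * pp + pp = (t + 1) * pp := by ring
        have h7 : (t + 1) * pp ≤ bb * pp := Nat.mul_le_mul_right _ (by omega)
        omega
    rw [h2, Nat.card_Ico]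
    omega
  · next ht =>
    push_neg at ht
    rw [Finset.filter_false_of_mem, Finset.card_empty]
    intro y hy hdiv
    rw [mem_range] at hy
    have : y / pp < bb := (Nat.div_lt_iff_lt_mul hpp).mpr hy
    omega

-- factorization of counting over a product of permutation groups
lemma card_pi_filter {n : ℕ} (G : Fin n → Type*) [∀ m, Fintype (G m)]
    [∀ m, DecidableEq (G m)] (P : ∀ m, G m → Prop) [∀ m, DecidablePred (P m)] :
    (univ.filter fun σ : ∀ m, G m => ∀ m, P m (σ m)).card
      = ∏ m, (univ.filter (P m)).card := by
  rw [← Fintype.card_piFinset]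
  congr 1
  ext σ
  simp [Fintype.mem_piFinset]

/-- In the multi-species batch model, for three pairwise distinct
species `i, j, j'` and particles `k` (species `i`), `ℓ` (species `j`),
`ℓ'` (species `j'`), the probability of the joint event that the batch index of
`k` (species `i`) coincides with those of `ℓ` and of `ℓ'` equals
`min (b i) (min (b j) (b j')) / (b i * b j * b j')`. -/
theorem three_species_same_superbatch_prob
    (n : ℕ) (hn : 3 ≤ n) (b p N : Fin n → ℕ)
    (hb : ∀ m, 1 ≤ b m) (hp : ∀ m, 2 ≤ p m) (hN : ∀ m, N m = b m * p m)
    (i j j' : Fin n) (hij : i ≠ j) (hij' : i ≠ j') (hjj' : j ≠ j')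
    (k : Fin (N i)) (ℓ : Fin (N j)) (ℓ' : Fin (N j')) :
    ((Finset.univ.filter (fun σ : ∀ m : Fin n, Equiv.Perm (Fin (N m)) =>
        (σ i k : ℕ) / p i = (σ j ℓ : ℕ) / p j ∧
        (σ i k : ℕ) / p i = (σ j' ℓ' : ℕ) / p j')).card : ℝ) /
      (Fintype.card (∀ m : Fin n, Equiv.Perm (Fin (N m))) : ℝ)
    = (min (b i) (min (b j) (b j')) : ℝ) / ((b i : ℝ) * (b j : ℝ) * (b j' : ℝ)) := by
  classical
  have hpi : 0 < p i := by have := hp i; omega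
  have hpj : 0 < p j := by have := hp j; omega
  have hpj' : 0 < p j' := by have := hp j'; omega
  have hbi : 0 < b i := hb i
  have hbj : 0 < b j := hb j
  have hbj' : 0 < b j' := hb j'
  set C : ℕ := Fintype.card (∀ m : Fin n, Equiv.Perm (Fin (N m))) with hC
  set B : ℕ := b i * b j * b j' with hBdef
  set mn : ℕ := min (b i) (min (b j) (b j')) with hmndef
  -- the predicate family
  set P : ℕ → ∀ m : Fin n, Equiv.Perm (Fin (N m)) → Prop := fun t m τ =>
    (∀ h : m = i, ((τ (Fin.cast (congrArg N h).symm k) : Fin (N m)) : ℕ) / p i = t) ∧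
    (∀ h : m = j, ((τ (Fin.cast (congrArg N h).symm ℓ) : Fin (N m)) : ℕ) / p j = t) ∧
    (∀ h : m = j', ((τ (Fin.cast (congrArg N h).symm ℓ') : Fin (N m)) : ℕ) / p j' = t)
    with hPdef
  have hPiff : ∀ (t : ℕ) (σ : ∀ m : Fin n, Equiv.Perm (Fin (N m))),
      (∀ m, P t m (σ m)) ↔
        ((σ i k : ℕ) / p i = t ∧ (σ j ℓ : ℕ) / p j = t ∧ (σ j' ℓ' : ℕ) / p j' = t) := by
    intro t σ
    constructor
    · intro H
      exact ⟨(H i).1 rfl, (H j).2.1 rfl, (H j').2.2 rfl⟩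
    · rintro ⟨h1, h2, h3⟩ m
      refine ⟨?_, ?_, ?_⟩
      · rintro rfl; exact h1
      · rintro rfl; exact h2
      · rintro rfl; exact h3
  -- cardinalities of the coordinate filters
  have hcoord_i : ∀ t, (univ.filter (P t i)).card
      = (univ.filter fun τ : Equiv.Perm (Fin (N i)) => (τ k : ℕ) / p i = t).card := by
    intro t
    congr 1
    apply Finset.filter_congr
    intro τ _
    constructor
    · exact fun h => h.1 rfl
    · exact fun h => ⟨fun _ => h, fun hji => absurd hji hij, fun hji => absurd hji hij'⟩
  have hcoord_j : ∀ t, (univ.filter (P t j)).card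
      = (univ.filter fun τ : Equiv.Perm (Fin (N j)) => (τ ℓ : ℕ) / p j = t).card := by
    intro t
    congr 1
    apply Finset.filter_congr
    intro τ _
    constructor
    · exact fun h => h.2.1 rfl
    · exact fun h => ⟨fun hh => absurd hh.symm hij, fun _ => h,
        fun hh => absurd hh hjj'⟩
  have hcoord_j' : ∀ t, (univ.filter (P t j')).card
      = (univ.filter fun τ : Equiv.Perm (Fin (N j')) => (τ ℓ' : ℕ) / p j' = t).card := by
    intro t
    congr 1
    apply Finset.filter_congr
    intro τ _
    constructor
    · exact fun h => h.2.2 rfl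
    · exact fun h => ⟨fun hh => absurd hh.symm hij', fun hh => absurd hh.symm hjj',
        fun _ => h⟩
  have hcoord_other : ∀ t, ∀ m : Fin n, m ≠ i → m ≠ j → m ≠ j' →
      (univ.filter (P t m)).card = Fintype.card (Equiv.Perm (Fin (N m))) := by
    intro t m hmi hmj hmj'
    rw [Finset.filter_true_of_mem, Finset.card_univ]
    intro τ _
    exact ⟨fun h => absurd h hmi, fun h => absurd h hmj, fun h => absurd h hmj'⟩
  -- the basic evaluation identity per coordinate
  have heval : ∀ (M : ℕ) (x : Fin M) (bb pp t : ℕ), M = bb * pp → 0 < pp → 0 < bb →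
      (univ.filter fun τ : Equiv.Perm (Fin M) => (τ x : ℕ) / pp = t).card * bb
        = (if t < bb then 1 else 0) * Fintype.card (Equiv.Perm (Fin M)) := by
    intro M x bb pp t hM hpp hbb
    have h1 := card_eval M x (fun y => (y : ℕ) / pp = t)
    rw [card_div_eq M bb pp t hM hpp] at h1
    by_cases ht : t < bb
    · rw [if_pos ht] at h1 ⊢
      rw [one_mul]
      have h2 : (univ.filter fun τ : Equiv.Perm (Fin M) => (τ x : ℕ) / pp = t).card
          * bb * pp = Fintype.card (Equiv.Perm (Fin M)) * pp := by
        rw [mul_assoc, ← hM, h1]; ring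
      exact Nat.eq_of_mul_eq_mul_right hpp h2
    · rw [if_neg ht] at h1 ⊢
      rw [zero_mul] at h1 ⊢
      have hMpos : 0 < M := by rw [hM]; exact Nat.mul_pos hbb hpp
      have : (univ.filter fun τ : Equiv.Perm (Fin M) => (τ x : ℕ) / pp = t).card = 0 := by
        rcases Nat.mul_eq_zero.mp h1 with h | h
        · exact h
        · omega
      rw [this, zero_mul]
  -- the weight function
  set w : Fin n → ℕ := fun m => if m = i then b i else if m = j then b j
    else if m = j' then b j' else 1 with hwdef
  have hw : ∏ m, w m = B := by
    have hsub : ({i, j, j'} : Finset (Fin n)) ⊆ univ := subset_univ _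
    rw [← Finset.prod_subset hsub (fun m _ hm => by
      simp only [Finset.mem_insert, Finset.mem_singleton, not_or] at hm
      simp [hwdef, hm.1, hm.2.1, hm.2.2])]
    rw [Finset.prod_insert (by simp [hij, hij']), Finset.prod_insert (by simp [hjj']),
      Finset.prod_singleton]
    have e1 : w i = b i := by simp [hwdef]
    have e2 : w j = b j := by simp [hwdef, Ne.symm hij]
    have e3 : w j' = b j' := by simp [hwdef, Ne.symm hij', Ne.symm hjj']
    rw [e1, e2, e3, hBdef, mul_assoc]
  -- key identity for each t
  have key : ∀ t : ℕ,
      (univ.filter fun σ : ∀ m : Fin n, Equiv.Perm (Fin (N m)) =>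
        (σ i k : ℕ) / p i = t ∧ (σ j ℓ : ℕ) / p j = t ∧ (σ j' ℓ' : ℕ) / p j' = t).card * B
      = (if t < mn then 1 else 0) * C := by
    intro t
    have hfe : (univ.filter fun σ : ∀ m : Fin n, Equiv.Perm (Fin (N m)) =>
        (σ i k : ℕ) / p i = t ∧ (σ j ℓ : ℕ) / p j = t ∧ (σ j' ℓ' : ℕ) / p j' = t)
        = (univ.filter fun σ : ∀ m : Fin n, Equiv.Perm (Fin (N m)) =>
            ∀ m, P t m (σ m)) := by
      apply Finset.filter_congr
      intro σ _
      exact (hPiff t σ).symm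
    rw [hfe, card_pi_filter (fun m => Equiv.Perm (Fin (N m))) (P t)]
    by_cases ht : t < mn
    · rw [if_pos ht, one_mul]
      have hti : t < b i := lt_of_lt_of_le ht (min_le_left _ _)
      have htj : t < b j := lt_of_lt_of_le ht (le_trans (min_le_right _ _) (min_le_left _ _))
      have htj' : t < b j' := lt_of_lt_of_le ht (le_trans (min_le_right _ _) (min_le_right _ _))
      have hcw : ∀ m : Fin n, (univ.filter (P t m)).card * w m
          = Fintype.card (Equiv.Perm (Fin (N m))) := by
        intro m
        by_cases hmi : m = i
        · subst hmi
          rw [hcoord_i t]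
          have := heval (N m) k (b m) (p m) t (hN m) hpi hbi
          rw [if_pos hti] at this
          simpa [hwdef] using this
        · by_cases hmj : m = j
          · subst hmj
            rw [hcoord_j t]
            have := heval (N m) ℓ (b m) (p m) t (hN m) hpj hbj
            rw [if_pos htj] at this
            simpa [hwdef, hmi] using this
          · by_cases hmj' : m = j'
            · subst hmj'
              rw [hcoord_j' t]
              have := heval (N m) ℓ' (b m) (p m) t (hN m) hpj' hbj'
              rw [if_pos htj'] at this
              simpa [hwdef, hmi, hmj] using this
            · rw [hcoord_other t m hmi hmj hmj']
              simp [hwdef, hmi, hmj, hmj']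
      calc (∏ m, (univ.filter (P t m)).card) * B
          = (∏ m, (univ.filter (P t m)).card) * ∏ m, w m := by rw [hw]
        _ = ∏ m, ((univ.filter (P t m)).card * w m) := by rw [Finset.prod_mul_distrib]
        _ = ∏ m, Fintype.card (Equiv.Perm (Fin (N m))) := Finset.prod_congr rfl fun m _ => hcw m
        _ = C := by rw [hC, Fintype.card_pi]
    · rw [if_neg ht, zero_mul]
      have hone : b i ≤ t ∨ b j ≤ t ∨ b j' ≤ t := by
        by_contra hcon
        push_neg at hcon
        exact ht (lt_min hcon.1 (lt_min hcon.2.1 hcon.2.2))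
      have hzero : ∃ m : Fin n, (univ.filter (P t m)).card = 0 := by
        rcases hone with h | h | h
        · refine ⟨i, ?_⟩
          rw [hcoord_i t]
          have h1 := card_eval (N i) k (fun y => (y : ℕ) / p i = t)
          rw [card_div_eq (N i) (b i) (p i) t (hN i) hpi, if_neg (by omega), zero_mul] at h1
          have hMpos : 0 < N i := by rw [hN i]; exact Nat.mul_pos hbi hpi
          rcases Nat.mul_eq_zero.mp h1 with h2 | h2
          · exact h2
          · omega
        · refine ⟨j, ?_⟩
          rw [hcoord_j t]
          have h1 := card_eval (N j) ℓ (fun y => (y : ℕ) / p j = t)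
          rw [card_div_eq (N j) (b j) (p j) t (hN j) hpj, if_neg (by omega), zero_mul] at h1
          have hMpos : 0 < N j := by rw [hN j]; exact Nat.mul_pos hbj hpj
          rcases Nat.mul_eq_zero.mp h1 with h2 | h2
          · exact h2
          · omega
        · refine ⟨j', ?_⟩
          rw [hcoord_j' t]
          have h1 := card_eval (N j') ℓ' (fun y => (y : ℕ) / p j' = t)
          rw [card_div_eq (N j') (b j') (p j') t (hN j') hpj', if_neg (by omega), zero_mul] at h1
          have hMpos : 0 < N j' := by rw [hN j']; exact Nat.mul_pos hbj' hpj'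
          rcases Nat.mul_eq_zero.mp h1 with h2 | h2
          · exact h2
          · omega
      rcases hzero with ⟨m, hm⟩
      rw [Finset.prod_eq_zero (mem_univ m) hm, zero_mul]
  -- decompose the main filter fiberwise
  set T : ℕ := (Finset.univ.filter (fun σ : ∀ m : Fin n, Equiv.Perm (Fin (N m)) =>
      (σ i k : ℕ) / p i = (σ j ℓ : ℕ) / p j ∧
      (σ i k : ℕ) / p i = (σ j' ℓ' : ℕ) / p j')).card with hTdef
  have hT : T = ∑ t ∈ range (b i),
      (univ.filter fun σ : ∀ m : Fin n, Equiv.Perm (Fin (N m)) =>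
        (σ i k : ℕ) / p i = t ∧ (σ j ℓ : ℕ) / p j = t ∧ (σ j' ℓ' : ℕ) / p j' = t).card := by
    rw [hTdef]
    rw [Finset.card_eq_sum_card_fiberwise (f := fun σ => (σ i k : ℕ) / p i)
      (t := range (b i)) (fun σ _ => by
        rw [Finset.mem_coe, mem_range]
        show (σ i k : ℕ) / p i < b i
        have hlt : (σ i k : ℕ) < b i * p i := by rw [← hN i]; exact (σ i k).isLt
        exact (Nat.div_lt_iff_lt_mul hpi).mpr hlt)]
    refine Finset.sum_congr rfl fun t _ => ?_
    rw [Finset.filter_filter]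
    congr 1
    apply Finset.filter_congr
    intro σ _
    constructor
    · rintro ⟨⟨h1, h2⟩, h3⟩
      exact ⟨h3, h1.symm.trans h3, h2.symm.trans h3⟩
    · rintro ⟨h1, h2, h3⟩
      exact ⟨⟨h1.trans h2.symm, h1.trans h3.symm⟩, h1⟩
  -- the main counting identity
  have hfr : (range (b i)).filter (fun t => t < mn) = range mn := by
    ext t
    simp only [mem_filter, mem_range]
    have hmnle : mn ≤ b i := min_le_left _ _
    exact ⟨fun h => h.2, fun h => ⟨lt_of_lt_of_le h hmnle, h⟩⟩
  have main : T * B = mn * C := by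
    calc T * B
        = ∑ t ∈ range (b i),
            (univ.filter fun σ : ∀ m : Fin n, Equiv.Perm (Fin (N m)) =>
              (σ i k : ℕ) / p i = t ∧ (σ j ℓ : ℕ) / p j = t ∧
                (σ j' ℓ' : ℕ) / p j' = t).card * B := by
          rw [hT, Finset.sum_mul]
      _ = ∑ t ∈ range (b i), (if t < mn then 1 else 0) * C :=
          Finset.sum_congr rfl fun t _ => key t
      _ = (∑ t ∈ range (b i), if t < mn then 1 else 0) * C := by
          rw [Finset.sum_mul]
      _ = mn * C := by
          rw [← Finset.card_filter, hfr, Finset.card_range]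
  -- conclude over the reals
  have hCpos : 0 < C := by rw [hC]; exact Fintype.card_pos
  have hBpos : 0 < B := by rw [hBdef]; positivity
  have hC0 : (C : ℝ) ≠ 0 := by exact_mod_cast hCpos.ne'
  rw [div_eq_div_iff hC0 (by positivity)]
  have hmain' : (T : ℝ) * B = mn * C := by exact_mod_cast main
  rw [hBdef] at hmain'
  rw [hmndef] at hmain'
  push_cast at hmain' ⊢
  linarith [hmain']
end

section
/- In the multi-species batch model, for two distinct species i ≠ j, a particle k of species i, and two distinct particles ℓ ≠ ℓ' of species j, the probability of the joint event a_i(k) = a_j(ℓ) and a_i(k) = a_j(ℓ') equals min{b_i, b_j}(p_j − 1)/(b_i · b_j · (N_j − 1)). -/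
open Finset



private lemma exists_perm_two {N : ℕ} {y y' z z' : Fin N} (hy : y ≠ y') (hz : z ≠ z') :
    ∃ τ : Equiv.Perm (Fin N), τ y = z ∧ τ y' = z' := by
  refine ⟨Equiv.swap (Equiv.swap y z y') z' * Equiv.swap y z, ?_, ?_⟩
  · simp only [Equiv.Perm.mul_apply, Equiv.swap_apply_left]
    rw [Equiv.swap_apply_of_ne_of_ne _ hz]
    intro h
    exact hy (Equiv.injective (Equiv.swap y z) (by rw [← h, Equiv.swap_apply_left])).symm
  · simp [Equiv.Perm.mul_apply]

private lemma card_fiber_two {N : ℕ} {ℓ ℓ' : Fin N}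
    {y y' z z' : Fin N} (hy : y ≠ y') (hz : z ≠ z') :
    (Finset.univ.filter fun σ : Equiv.Perm (Fin N) => σ ℓ = y ∧ σ ℓ' = y').card =
    (Finset.univ.filter fun σ : Equiv.Perm (Fin N) => σ ℓ = z ∧ σ ℓ' = z').card := by
  obtain ⟨τ, h1, h2⟩ := exists_perm_two hy hz
  refine Finset.card_bij' (fun σ _ => τ * σ) (fun σ _ => τ⁻¹ * σ) ?_ ?_ ?_ ?_
  · intro σ hσ
    simp only [mem_filter, mem_univ, true_and] at hσ ⊢
    simp [Equiv.Perm.mul_apply, hσ.1, hσ.2, h1, h2]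
  · intro σ hσ
    simp only [mem_filter, mem_univ, true_and] at hσ ⊢
    constructor
    · rw [Equiv.Perm.mul_apply, hσ.1, ← h1]; simp
    · rw [Equiv.Perm.mul_apply, hσ.2, ← h2]; simp
  · intro σ _; simp [mul_assoc]
  · intro σ _; simp [mul_assoc]

private lemma card_fiber_one {N : ℕ} {k : Fin N} (x z : Fin N) :
    (Finset.univ.filter fun σ : Equiv.Perm (Fin N) => σ k = x).card =
    (Finset.univ.filter fun σ : Equiv.Perm (Fin N) => σ k = z).card := by
  refine Finset.card_bij' (fun σ _ => Equiv.swap x z * σ) (fun σ _ => (Equiv.swap x z)⁻¹ * σ) ?_ ?_ ?_ ?_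
  · intro σ hσ
    simp only [mem_filter, mem_univ, true_and] at hσ ⊢
    simp [Equiv.Perm.mul_apply, hσ]
  · intro σ hσ
    simp only [mem_filter, mem_univ, true_and] at hσ ⊢
    rw [Equiv.Perm.mul_apply, hσ]
    simp
  · intro σ _; simp [mul_assoc]
  · intro σ _; simp [mul_assoc]

private lemma card_fiber_one_mul {N : ℕ} (k x : Fin N) :
    (Finset.univ.filter fun σ : Equiv.Perm (Fin N) => σ k = x).card * N = N.factorial := by
  have h := Finset.card_eq_sum_card_fiberwise
    (f := fun σ : Equiv.Perm (Fin N) => σ k) (s := Finset.univ) (t := Finset.univ) (by simp)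
  rw [Finset.card_univ, Fintype.card_perm, Fintype.card_fin] at h
  rw [Finset.sum_congr rfl (fun y _ => by
    simpa using card_fiber_one (N := N) (k := k) y x)] at h
  rw [Finset.sum_const, Finset.card_univ, Fintype.card_fin, smul_eq_mul] at h
  rw [h, mul_comm]

private lemma card_fiber_two_mul {N : ℕ} {ℓ ℓ' : Fin N} (hll : ℓ ≠ ℓ')
    {y y' : Fin N} (hy : y ≠ y') :
    (Finset.univ.filter fun σ : Equiv.Perm (Fin N) => σ ℓ = y ∧ σ ℓ' = y').card
      * (N * N - N) = N.factorial := by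
  have h := Finset.card_eq_sum_card_fiberwise
    (f := fun σ : Equiv.Perm (Fin N) => (σ ℓ, σ ℓ'))
    (s := Finset.univ) (t := Finset.univ.offDiag)
    (fun σ _ => Finset.mem_offDiag.2 ⟨mem_univ _, mem_univ _, σ.injective.ne hll⟩)
  rw [Finset.card_univ, Fintype.card_perm, Fintype.card_fin] at h
  rw [Finset.sum_congr rfl (fun r hr => by
    have hr' := (Finset.mem_offDiag.1 hr).2.2
    have : (Finset.univ.filter fun σ : Equiv.Perm (Fin N) => (σ ℓ, σ ℓ') = r)
        = Finset.univ.filter fun σ : Equiv.Perm (Fin N) => σ ℓ = r.1 ∧ σ ℓ' = r.2 := by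
      apply Finset.filter_congr; intro σ _; simp [Prod.ext_iff]
    exact (congrArg Finset.card this).trans (card_fiber_two (ℓ := ℓ) (ℓ' := ℓ') hr' hy))] at h
  rw [Finset.sum_const, Finset.offDiag_card, Finset.card_univ, Fintype.card_fin,
    smul_eq_mul] at h
  rw [h, mul_comm]


private lemma stage1 {n : ℕ} {B : Fin n → Type*} [∀ m, Fintype (B m)] [∀ m, DecidableEq (B m)]
    (i j : Fin n) (hij : i ≠ j) (P : B i → B j → Prop) [∀ a c, Decidable (P a c)] :
    (Finset.univ.filter fun σ : ∀ m, B m => P (σ i) (σ j)).card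
        * (Fintype.card (B i) * Fintype.card (B j))
      = (Finset.univ.filter fun q : B i × B j => P q.1 q.2).card
        * Fintype.card (∀ m, B m) := by
  classical
  set fib : B i × B j → ℕ :=
    fun q => (Finset.univ.filter fun σ : ∀ m, B m => (σ i, σ j) = q).card with hfibdef
  have hfib : ∀ q q' : B i × B j, fib q = fib q' := by
    intro q q'
    refine Finset.card_bij'
      (fun σ _ => Function.update (Function.update σ i q'.1) j q'.2)
      (fun σ _ => Function.update (Function.update σ i q.1) j q.2) ?_ ?_ ?_ ?_
    · intro σ hσ
      simp only [mem_filter, mem_univ, true_and, Prod.ext_iff] at hσ ⊢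
      constructor
      · rw [Function.update_of_ne hij, Function.update_self]
      · rw [Function.update_self]
    · intro σ hσ
      simp only [mem_filter, mem_univ, true_and, Prod.ext_iff] at hσ ⊢
      constructor
      · rw [Function.update_of_ne hij, Function.update_self]
      · rw [Function.update_self]
    · intro σ hσ
      simp only [mem_filter, mem_univ, true_and, Prod.ext_iff] at hσ
      funext m
      beta_reduce
      rcases eq_or_ne m j with rfl | hmj
      · rw [Function.update_self, hσ.2]
      · rw [Function.update_of_ne hmj]
        rcases eq_or_ne m i with rfl | hmi
        · rw [Function.update_self, hσ.1]
        · rw [Function.update_of_ne hmi, Function.update_of_ne hmj,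
            Function.update_of_ne hmi]
    · intro σ hσ
      simp only [mem_filter, mem_univ, true_and, Prod.ext_iff] at hσ
      funext m
      beta_reduce
      rcases eq_or_ne m j with rfl | hmj
      · rw [Function.update_self, hσ.2]
      · rw [Function.update_of_ne hmj]
        rcases eq_or_ne m i with rfl | hmi
        · rw [Function.update_self, hσ.1]
        · rw [Function.update_of_ne hmi, Function.update_of_ne hmj,
            Function.update_of_ne hmi]
  have h1 : (Finset.univ.filter fun σ : ∀ m, B m => P (σ i) (σ j)).card
      = ∑ q ∈ Finset.univ.filter (fun q : B i × B j => P q.1 q.2), fib q := by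
    rw [Finset.card_eq_sum_card_fiberwise
      (f := fun σ : ∀ m, B m => (σ i, σ j))
      (t := Finset.univ.filter fun q : B i × B j => P q.1 q.2)
      (fun σ hσ => by
        simp only [Finset.mem_coe, mem_filter, mem_univ, true_and] at hσ ⊢; exact hσ)]
    refine Finset.sum_congr rfl fun q hq => ?_
    simp only [mem_filter, mem_univ, true_and] at hq
    congr 1
    ext σ
    simp only [mem_filter, mem_univ, true_and]
    constructor
    · exact fun h => h.2
    · intro h
      refine ⟨?_, h⟩
      have h1 : σ i = q.1 := by rw [← h]
      have h2 : σ j = q.2 := by rw [← h]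
      rw [h1, h2]; exact hq
  have h2 : Fintype.card (∀ m, B m) = ∑ q ∈ (Finset.univ : Finset (B i × B j)), fib q := by
    rw [← Finset.card_univ]
    exact Finset.card_eq_sum_card_fiberwise (fun σ _ => mem_univ _)
  rw [h1, h2]
  have hc : Fintype.card (B i) * Fintype.card (B j)
      = (Finset.univ : Finset (B i × B j)).card := by
    rw [Finset.card_univ, Fintype.card_prod]
  rw [hc, Finset.sum_mul]
  calc ∑ q ∈ Finset.univ.filter (fun q : B i × B j => P q.1 q.2),
        fib q * (Finset.univ : Finset (B i × B j)).card
      = ∑ q ∈ Finset.univ.filter (fun q : B i × B j => P q.1 q.2),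
          ∑ q' ∈ (Finset.univ : Finset (B i × B j)), fib q' := by
        refine Finset.sum_congr rfl fun q _ => ?_
        rw [Finset.sum_congr rfl fun q' _ => (hfib q' q), Finset.sum_const, smul_eq_mul,
          mul_comm]
    _ = _ := by rw [Finset.sum_const, smul_eq_mul]

private lemma stage2 {Ni Nj pi pj : ℕ} (k : Fin Ni) (ℓ ℓ' : Fin Nj) (hll : ℓ ≠ ℓ') :
    (Finset.univ.filter fun q : Equiv.Perm (Fin Ni) × Equiv.Perm (Fin Nj) =>
        (q.1 k : ℕ) / pi = (q.2 ℓ : ℕ) / pj ∧ (q.1 k : ℕ) / pi = (q.2 ℓ' : ℕ) / pj).card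
      * (Ni * (Nj * Nj - Nj))
    = (Finset.univ.filter fun r : Fin Ni × Fin Nj × Fin Nj =>
        ((r.1 : ℕ) / pi = (r.2.1 : ℕ) / pj ∧ (r.1 : ℕ) / pi = (r.2.2 : ℕ) / pj)
          ∧ r.2.1 ≠ r.2.2).card
      * (Ni.factorial * Nj.factorial) := by
  classical
  set T := Finset.univ.filter fun r : Fin Ni × Fin Nj × Fin Nj =>
        ((r.1 : ℕ) / pi = (r.2.1 : ℕ) / pj ∧ (r.1 : ℕ) / pi = (r.2.2 : ℕ) / pj)
          ∧ r.2.1 ≠ r.2.2 with hT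
  have h := Finset.card_eq_sum_card_fiberwise
    (f := fun q : Equiv.Perm (Fin Ni) × Equiv.Perm (Fin Nj) => (q.1 k, (q.2 ℓ, q.2 ℓ')))
    (s := Finset.univ.filter fun q : Equiv.Perm (Fin Ni) × Equiv.Perm (Fin Nj) =>
        (q.1 k : ℕ) / pi = (q.2 ℓ : ℕ) / pj ∧ (q.1 k : ℕ) / pi = (q.2 ℓ' : ℕ) / pj)
    (t := T)
    (fun q hq => by
      simp only [Finset.mem_coe, mem_filter, mem_univ, true_and, hT] at hq ⊢
      exact ⟨hq, q.2.injective.ne hll⟩)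
  rw [h, Finset.sum_mul]
  rw [Finset.sum_congr rfl (fun r hr => ?_), Finset.sum_const, smul_eq_mul]
  simp only [mem_filter, mem_univ, true_and, hT] at hr
  have he : ((Finset.univ.filter fun q : Equiv.Perm (Fin Ni) × Equiv.Perm (Fin Nj) =>
        (q.1 k : ℕ) / pi = (q.2 ℓ : ℕ) / pj ∧ (q.1 k : ℕ) / pi = (q.2 ℓ' : ℕ) / pj).filter
        fun q => (q.1 k, (q.2 ℓ, q.2 ℓ')) = r)
      = (Finset.univ.filter fun a : Equiv.Perm (Fin Ni) => a k = r.1) ×ˢ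
        (Finset.univ.filter fun c : Equiv.Perm (Fin Nj) => c ℓ = r.2.1 ∧ c ℓ' = r.2.2) := by
    ext q
    simp only [Finset.mem_filter, Finset.mem_product, mem_univ, true_and, Prod.ext_iff]
    constructor
    · rintro ⟨-, h1, h2, h3⟩
      exact ⟨h1, h2, h3⟩
    · rintro ⟨h1, h2, h3⟩
      refine ⟨⟨?_, ?_⟩, h1, h2, h3⟩
      · rw [h1, h2]; exact hr.1.1
      · rw [h1, h3]; exact hr.1.2
  rw [he, Finset.card_product]
  calc (Finset.univ.filter fun a : Equiv.Perm (Fin Ni) => a k = r.1).card *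
        (Finset.univ.filter fun c : Equiv.Perm (Fin Nj) => c ℓ = r.2.1 ∧ c ℓ' = r.2.2).card *
        (Ni * (Nj * Nj - Nj))
      = ((Finset.univ.filter fun a : Equiv.Perm (Fin Ni) => a k = r.1).card * Ni) *
        ((Finset.univ.filter fun c : Equiv.Perm (Fin Nj) =>
            c ℓ = r.2.1 ∧ c ℓ' = r.2.2).card * (Nj * Nj - Nj)) := by ring
    _ = Ni.factorial * Nj.factorial := by
        rw [card_fiber_one_mul k r.1, card_fiber_two_mul hll hr.2]


private lemma card_batch {M bq q : ℕ} (hM : M = bq * q) (hq : 0 < q) {t : ℕ} (ht : t < bq) :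
    (Finset.univ.filter fun y : Fin M => t = (y : ℕ) / q).card = q := by
  subst hM
  have key : (Finset.univ.filter fun y : Fin (bq * q) => t = (y : ℕ) / q).card
      = (Finset.univ : Finset (Fin q)).card := by
    refine Finset.card_bij' (fun y _ => (⟨(y : ℕ) % q, Nat.mod_lt _ hq⟩ : Fin q))
      (fun r _ => (⟨t * q + (r : ℕ), ?_⟩ : Fin (bq * q))) ?_ ?_ ?_ ?_
    · calc t * q + (r : ℕ) < t * q + q := by omega
        _ = (t + 1) * q := by ring
        _ ≤ bq * q := Nat.mul_le_mul_right _ ht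
    · intro y _; exact mem_univ _
    · intro r _
      simp only [mem_filter, mem_univ, true_and]
      rw [Nat.add_comm, Nat.add_mul_div_right _ _ hq, Nat.div_eq_of_lt r.isLt]
      omega
    · intro y hy
      simp only [mem_filter, mem_univ, true_and] at hy
      apply Fin.ext
      simp only
      rw [hy, Nat.mul_comm, Nat.div_add_mod]
    · intro r _
      apply Fin.ext
      simp only
      rw [Nat.add_comm, Nat.add_mul_mod_self_right]
      exact Nat.mod_eq_of_lt r.isLt
  rw [key, Finset.card_univ, Fintype.card_fin]

private lemma card_batch_zero {M bq q : ℕ} (hM : M = bq * q) {t : ℕ} (ht : bq ≤ t) :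
    (Finset.univ.filter fun y : Fin M => t = (y : ℕ) / q).card = 0 := by
  subst hM
  rw [Finset.card_eq_zero, Finset.filter_eq_empty_iff]
  intro y _
  have hy : (y : ℕ) < bq * q := y.isLt
  intro h
  have : (y : ℕ) / q < bq := by
    rcases Nat.eq_zero_or_pos q with rfl | hq
    · simp at hy
    · exact Nat.div_lt_iff_lt_mul hq |>.2 (by omega)
  omega

private lemma stage3 {Ni Nj bi bj pi pj : ℕ} (hNi : Ni = bi * pi) (hNj : Nj = bj * pj)
    (hpi : 0 < pi) (hpj : 0 < pj) :
    (Finset.univ.filter fun r : Fin Ni × Fin Nj × Fin Nj =>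
        ((r.1 : ℕ) / pi = (r.2.1 : ℕ) / pj ∧ (r.1 : ℕ) / pi = (r.2.2 : ℕ) / pj)
          ∧ r.2.1 ≠ r.2.2).card
    = min bi bj * (pi * (pj * pj - pj)) := by
  classical
  have h := Finset.card_eq_sum_card_fiberwise
    (f := fun r : Fin Ni × Fin Nj × Fin Nj => r.1)
    (s := Finset.univ.filter fun r : Fin Ni × Fin Nj × Fin Nj =>
        ((r.1 : ℕ) / pi = (r.2.1 : ℕ) / pj ∧ (r.1 : ℕ) / pi = (r.2.2 : ℕ) / pj)
          ∧ r.2.1 ≠ r.2.2)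
    (t := Finset.univ) (fun r _ => mem_univ _)
  rw [h]
  have hterm : ∀ x : Fin Ni,
      ((Finset.univ.filter fun r : Fin Ni × Fin Nj × Fin Nj =>
        ((r.1 : ℕ) / pi = (r.2.1 : ℕ) / pj ∧ (r.1 : ℕ) / pi = (r.2.2 : ℕ) / pj)
          ∧ r.2.1 ≠ r.2.2).filter fun r => r.1 = x).card
      = (if (x : ℕ) / pi < bj then pj * pj - pj else 0) := by
    intro x
    have hbij : ((Finset.univ.filter fun r : Fin Ni × Fin Nj × Fin Nj =>
        ((r.1 : ℕ) / pi = (r.2.1 : ℕ) / pj ∧ (r.1 : ℕ) / pi = (r.2.2 : ℕ) / pj)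
          ∧ r.2.1 ≠ r.2.2).filter fun r => r.1 = x).card
        = (Finset.univ.filter fun y : Fin Nj =>
            (x : ℕ) / pi = (y : ℕ) / pj).offDiag.card := by
      refine Finset.card_bij' (fun r _ => r.2) (fun yy _ => (x, yy)) ?_ ?_ ?_ ?_
      · intro r hr
        simp only [mem_filter, mem_univ, true_and] at hr
        obtain ⟨⟨⟨h1, h2⟩, h3⟩, h4⟩ := hr
        subst h4
        exact Finset.mem_offDiag.2 ⟨by simp [h1], by simp [h2], h3⟩
      · intro yy hyy
        rw [Finset.mem_offDiag] at hyy
        simp only [mem_filter, mem_univ, true_and] at hyy ⊢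
        tauto
      · intro r hr
        simp only [mem_filter, mem_univ, true_and] at hr
        beta_reduce
        rw [← hr.2]
      · intro yy _; rfl
    rw [hbij, Finset.offDiag_card]
    by_cases hx : (x : ℕ) / pi < bj
    · rw [if_pos hx, card_batch hNj hpj hx]
    · rw [if_neg hx, card_batch_zero hNj (le_of_not_gt hx)]
  rw [Finset.sum_congr rfl fun x _ => hterm x]
  have hmaps : ∀ x : Fin Ni, x ∈ (Finset.univ : Finset (Fin Ni)) →
      (x : ℕ) / pi ∈ Finset.range bi := by
    intro x _
    rw [Finset.mem_range]
    exact (Nat.div_lt_iff_lt_mul hpi).2 (hNi ▸ x.isLt)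
  rw [← Finset.sum_fiberwise_of_maps_to hmaps
    (fun x : Fin Ni => if (x : ℕ) / pi < bj then pj * pj - pj else 0)]
  have hinner : ∀ t ∈ Finset.range bi,
      (∑ x ∈ Finset.univ.filter fun x : Fin Ni => (x : ℕ) / pi = t,
        if (x : ℕ) / pi < bj then pj * pj - pj else 0)
      = pi * (if t < bj then pj * pj - pj else 0) := by
    intro t ht
    rw [Finset.mem_range] at ht
    rw [Finset.sum_congr rfl (fun x hx => by
      rw [(Finset.mem_filter.1 hx).2])]
    rw [Finset.sum_const, smul_eq_mul]
    congr 1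
    have : (Finset.univ.filter fun x : Fin Ni => (x : ℕ) / pi = t)
        = Finset.univ.filter fun x : Fin Ni => t = (x : ℕ) / pi := by
      apply Finset.filter_congr; intro x _; simp [eq_comm]
    rw [this, card_batch hNi hpi ht]
  rw [Finset.sum_congr rfl hinner, ← Finset.mul_sum]
  rw [Finset.sum_ite, Finset.sum_const, Finset.sum_const_zero, smul_eq_mul, add_zero]
  have : (Finset.range bi).filter (fun t => t < bj) = Finset.range (min bi bj) := by
    ext t
    simp only [Finset.mem_filter, Finset.mem_range, lt_min_iff]
  rw [this, Finset.card_range]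
  ring

/-- In the multi-species batch model, for two distinct species
`i ≠ j`, a particle `k` of species `i` and two distinct particles `ℓ ≠ ℓ'` of
species `j`, the probability of the joint event that the batch index of `k`
coincides with those of `ℓ` and `ℓ'` equals
`min (b i) (b j) * (p j - 1) / (b i * b j * (N j - 1))`. -/
theorem cross_species_two_particles_prob
    (n : ℕ) (hn : 2 ≤ n) (b p N : Fin n → ℕ)
    (hb : ∀ m, 1 ≤ b m) (hp : ∀ m, 2 ≤ p m) (hN : ∀ m, N m = b m * p m)
    (i j : Fin n) (hij : i ≠ j) (k : Fin (N i)) (ℓ ℓ' : Fin (N j)) (hll' : ℓ ≠ ℓ') :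
    ((Finset.univ.filter (fun σ : ∀ m : Fin n, Equiv.Perm (Fin (N m)) =>
        (σ i k : ℕ) / p i = (σ j ℓ : ℕ) / p j ∧
        (σ i k : ℕ) / p i = (σ j ℓ' : ℕ) / p j)).card : ℝ) /
      (Fintype.card (∀ m : Fin n, Equiv.Perm (Fin (N m))) : ℝ)
    = ((min (b i) (b j) : ℝ) * ((p j : ℝ) - 1)) /
        ((b i : ℝ) * (b j : ℝ) * ((N j : ℝ) - 1)) := by
  classical
  have hpi : 0 < p i := lt_of_lt_of_le two_pos (hp i)
  have hpj : 0 < p j := lt_of_lt_of_le two_pos (hp j)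
  have hNi : 0 < N i := by rw [hN i]; exact Nat.mul_pos (hb i) hpi
  have hNj2 : 2 ≤ N j := by
    rw [hN j]
    calc 2 ≤ p j := hp j
      _ = 1 * p j := (one_mul _).symm
      _ ≤ b j * p j := Nat.mul_le_mul_right _ (hb j)
  -- Stage 1 : reduce to a pair of permutations
  have h1 : (Finset.univ.filter (fun σ : ∀ m : Fin n, Equiv.Perm (Fin (N m)) =>
        (σ i k : ℕ) / p i = (σ j ℓ : ℕ) / p j ∧
        (σ i k : ℕ) / p i = (σ j ℓ' : ℕ) / p j)).card
        * (Fintype.card (Equiv.Perm (Fin (N i))) * Fintype.card (Equiv.Perm (Fin (N j))))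
      = (Finset.univ.filter fun q : Equiv.Perm (Fin (N i)) × Equiv.Perm (Fin (N j)) =>
          (q.1 k : ℕ) / p i = (q.2 ℓ : ℕ) / p j ∧
          (q.1 k : ℕ) / p i = (q.2 ℓ' : ℕ) / p j).card
        * Fintype.card (∀ m : Fin n, Equiv.Perm (Fin (N m))) :=
    stage1 (B := fun m => Equiv.Perm (Fin (N m))) i j hij
      (fun a c => (a k : ℕ) / p i = (c ℓ : ℕ) / p j ∧ (a k : ℕ) / p i = (c ℓ' : ℕ) / p j)
  have h2 := stage2 (pi := p i) (pj := p j) k ℓ ℓ' hll'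
  have h3 := stage3 (hN i) (hN j) hpi hpj
    (Ni := N i) (Nj := N j) (bi := b i) (bj := b j) (pi := p i) (pj := p j)
  rw [h3] at h2
  rw [Fintype.card_perm, Fintype.card_perm, Fintype.card_fin, Fintype.card_fin] at h1
  -- Combine the natural-number identities
  set F := (Finset.univ.filter (fun σ : ∀ m : Fin n, Equiv.Perm (Fin (N m)) =>
        (σ i k : ℕ) / p i = (σ j ℓ : ℕ) / p j ∧
        (σ i k : ℕ) / p i = (σ j ℓ' : ℕ) / p j)).card with hF
  set C := Fintype.card (∀ m : Fin n, Equiv.Perm (Fin (N m))) with hCdef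
  set count := (Finset.univ.filter fun q : Equiv.Perm (Fin (N i)) × Equiv.Perm (Fin (N j)) =>
          (q.1 k : ℕ) / p i = (q.2 ℓ : ℕ) / p j ∧
          (q.1 k : ℕ) / p i = (q.2 ℓ' : ℕ) / p j).card with hcount
  set Tc := min (b i) (b j) * (p i * (p j * p j - p j)) with hTc
  set D := N i * (N j * N j - N j) with hD
  have key : F * D * ((N i).factorial * (N j).factorial)
      = Tc * C * ((N i).factorial * (N j).factorial) := by
    calc F * D * ((N i).factorial * (N j).factorial)
        = F * ((N i).factorial * (N j).factorial) * D := by ring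
      _ = count * C * D := by rw [h1]
      _ = count * D * C := by ring
      _ = Tc * ((N i).factorial * (N j).factorial) * C := by rw [h2]
      _ = Tc * C * ((N i).factorial * (N j).factorial) := by ring
  have hfacpos : 0 < (N i).factorial * (N j).factorial :=
    Nat.mul_pos (Nat.factorial_pos _) (Nat.factorial_pos _)
  have key2 : F * D = Tc * C := Nat.eq_of_mul_eq_mul_right hfacpos key
  have hCpos : 0 < C := Fintype.card_pos
  have hDpos : 0 < D := by
    have h' : N j < N j * N j := by nlinarith [hNj2]
    exact Nat.mul_pos hNi (Nat.sub_pos_of_lt h')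
  have hCR : (0 : ℝ) < (C : ℝ) := by exact_mod_cast hCpos
  have hDR : (0 : ℝ) < (D : ℝ) := by exact_mod_cast hDpos
  have step : (F : ℝ) / (C : ℝ) = (Tc : ℝ) / (D : ℝ) := by
    rw [div_eq_div_iff hCR.ne' hDR.ne']
    exact_mod_cast key2
  rw [step]
  -- Final arithmetic over ℝ
  have hNiR : (N i : ℝ) = (b i : ℝ) * (p i : ℝ) := by exact_mod_cast congrArg Nat.cast (hN i)
  have hNjR : (N j : ℝ) = (b j : ℝ) * (p j : ℝ) := by exact_mod_cast congrArg Nat.cast (hN j)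
  have hTcR : (Tc : ℝ) = (min (b i) (b j) : ℕ) * ((p i : ℝ) * ((p j : ℝ) * (p j : ℝ) - (p j : ℝ))) := by
    rw [hTc]
    push_cast [Nat.cast_sub (Nat.le_mul_of_pos_left _ hpj)]
    ring
  have hDRval : (D : ℝ) = (N i : ℝ) * ((N j : ℝ) * (N j : ℝ) - (N j : ℝ)) := by
    rw [hD]
    push_cast [Nat.cast_sub (Nat.le_mul_of_pos_left _ (lt_of_lt_of_le two_pos hNj2))]
    ring
  rw [hTcR, hDRval]
  have hbiR : (0 : ℝ) < (b i : ℝ) := by exact_mod_cast hb i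
  have hbjR : (0 : ℝ) < (b j : ℝ) := by exact_mod_cast hb j
  have hpiR : (0 : ℝ) < (p i : ℝ) := by exact_mod_cast hpi
  have hpjR : (0 : ℝ) < (p j : ℝ) := by exact_mod_cast hpj
  have hNjR1 : (1 : ℝ) < (N j : ℝ) := by exact_mod_cast hNj2
  have hden1 : (N i : ℝ) * ((N j : ℝ) * (N j : ℝ) - (N j : ℝ)) ≠ 0 := by
    apply ne_of_gt
    apply mul_pos
    · exact_mod_cast hNi
    · nlinarith
  have hden2 : (b i : ℝ) * (b j : ℝ) * ((N j : ℝ) - 1) ≠ 0 := by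
    apply ne_of_gt
    apply mul_pos (mul_pos hbiR hbjR)
    linarith
  rw [div_eq_div_iff hden1 hden2]
  rw [hNiR, hNjR]
  push_cast
  ring
end

section
/- In the multi-species batch model, for two distinct species i ≠ j, a particle ℓ of species j, and two distinct particles k ≠ ℓ' of species i, the probability of the joint event a_i(k) = a_j(ℓ) and a_i(k) = a_i(ℓ') equals min{b_i, b_j}(p_i − 1)/(b_i · b_j · (N_i − 1)). -/
open Finset

private lemma exists_perm_two' {α : Type*} [DecidableEq α] {x y x' y' : α}
    (hxy : x ≠ y) (hxy' : x' ≠ y') :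
    ∃ g : Equiv.Perm α, g x = x' ∧ g y = y' := by
  refine ⟨(Equiv.swap x x').trans (Equiv.swap (Equiv.swap x x' y) y'), ?_, ?_⟩
  · simp only [Equiv.trans_apply, Equiv.swap_apply_left]
    refine Equiv.swap_apply_of_ne_of_ne (fun h => hxy ?_) hxy'
    exact (Equiv.swap x x').injective ((Equiv.swap_apply_left x x').trans h)
  · simp only [Equiv.trans_apply, Equiv.swap_apply_left]

private lemma fib_const' {ι : Type*} [DecidableEq ι] [Fintype ι] {β : ι → Type*}
    [∀ m, Fintype (β m)] [∀ m, DecidableEq (β m)]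
    {i j : ι} (hij : i ≠ j) (y y' : β i × β j) :
    (Finset.univ.filter (fun σ : ∀ m, β m => (σ i, σ j) = y)).card
      = (Finset.univ.filter (fun σ : ∀ m, β m => (σ i, σ j) = y')).card := by
  refine Finset.card_nbij'
    (fun σ => Function.update (Function.update σ i y'.1) j y'.2)
    (fun σ => Function.update (Function.update σ i y.1) j y.2) ?_ ?_ ?_ ?_
  all_goals
    intro σ hσ
    simp only [Finset.mem_coe, Finset.mem_filter, Finset.mem_univ, true_and, Prod.ext_iff] at hσ ⊢
  · constructor
    · rw [Function.update_of_ne hij, Function.update_self]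
    · rw [Function.update_self]
  · constructor
    · rw [Function.update_of_ne hij, Function.update_self]
    · rw [Function.update_self]
  all_goals
    funext m
    rcases eq_or_ne m i with rfl | hmi
    · rw [Function.update_of_ne hij, Function.update_self]
      exact hσ.1.symm
    · rcases eq_or_ne m j with rfl | hmj
      · rw [Function.update_self]
        exact hσ.2.symm
      · rw [Function.update_of_ne hmj, Function.update_of_ne hmi,
          Function.update_of_ne hmj, Function.update_of_ne hmi]

private lemma pi_two_coord_count {ι : Type*} [DecidableEq ι] [Fintype ι] {β : ι → Type*}
    [∀ m, Fintype (β m)] [∀ m, DecidableEq (β m)] [∀ m, Nonempty (β m)]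
    {i j : ι} (hij : i ≠ j) (Q : β i → β j → Prop) [∀ a b, Decidable (Q a b)] :
    ∃ c : ℕ, 0 < c ∧
      (Finset.univ.filter (fun σ : ∀ m, β m => Q (σ i) (σ j))).card
        = (Finset.univ.filter (fun y : β i × β j => Q y.1 y.2)).card * c ∧
      Fintype.card (∀ m, β m) = Fintype.card (β i × β j) * c := by
  classical
  obtain ⟨y₀⟩ : Nonempty (β i × β j) := inferInstance
  set c := (Finset.univ.filter (fun σ : ∀ m, β m => (σ i, σ j) = y₀)).card with hc
  have hfib : ∀ y : β i × β j,
      (Finset.univ.filter (fun σ : ∀ m, β m => (σ i, σ j) = y)).card = c :=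
    fun y => fib_const' hij y y₀
  refine ⟨c, ?_, ?_, ?_⟩
  · rw [hc]
    apply Finset.card_pos.2
    refine ⟨Function.update (Function.update (fun m => Classical.arbitrary (β m)) i y₀.1) j y₀.2, ?_⟩
    simp only [Finset.mem_filter, Finset.mem_univ, true_and, Prod.ext_iff]
    constructor
    · rw [Function.update_of_ne hij, Function.update_self]
    · rw [Function.update_self]
  · rw [Finset.card_eq_sum_card_fiberwise
      (f := fun σ : ∀ m, β m => (σ i, σ j))
      (t := Finset.univ.filter (fun y : β i × β j => Q y.1 y.2))
      (fun σ hσ => by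
        simp only [Finset.mem_coe, Finset.mem_filter, Finset.mem_univ, true_and] at hσ ⊢; exact hσ)]
    rw [Finset.sum_congr rfl (fun y hy => ?_), Finset.sum_const, smul_eq_mul]
    have hQ : Q y.1 y.2 := by
      simpa only [Finset.mem_filter, Finset.mem_univ, true_and] using hy
    rw [Finset.filter_filter, ← hfib y]
    refine congrArg Finset.card (Finset.filter_congr (fun σ _ => ?_))
    constructor
    · rintro ⟨-, h⟩; exact h
    · intro h
      refine ⟨?_, h⟩
      subst h
      exact hQ
  · rw [← Finset.card_univ, Finset.card_eq_sum_card_fiberwise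
      (f := fun σ : ∀ m, β m => (σ i, σ j)) (t := Finset.univ)
      (fun σ _ => Finset.mem_univ _)]
    rw [Finset.sum_congr rfl (fun y _ => hfib y), Finset.sum_const, smul_eq_mul,
      Finset.card_univ]

private lemma perm_pair_count {α γ : Type*} [Fintype α] [DecidableEq α] [Fintype γ] [DecidableEq γ]
    (k ℓ' : α) (hkl' : k ≠ ℓ') (ℓ : γ) (R : α → α → γ → Prop) [∀ a b c, Decidable (R a b c)] :
    ∃ d : ℕ, 0 < d ∧
      (Finset.univ.filter (fun y : Equiv.Perm α × Equiv.Perm γ =>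
          R (y.1 k) (y.1 ℓ') (y.2 ℓ))).card
        = (Finset.univ.filter (fun t : α × α × γ => t.1 ≠ t.2.1 ∧ R t.1 t.2.1 t.2.2)).card * d ∧
      Fintype.card (Equiv.Perm α × Equiv.Perm γ)
        = (Finset.univ.filter (fun t : α × α × γ => t.1 ≠ t.2.1)).card * d := by
  classical
  set f : Equiv.Perm α × Equiv.Perm γ → α × α × γ := fun y => (y.1 k, y.1 ℓ', y.2 ℓ) with hf
  set d := (Finset.univ.filter (fun y => f y = (k, ℓ', ℓ))).card with hd
  have hfib : ∀ t : α × α × γ, t.1 ≠ t.2.1 →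
      (Finset.univ.filter (fun y => f y = t)).card = d := by
    rintro ⟨t1, t2, t3⟩ ht
    simp only at ht
    rw [hd]
    obtain ⟨g, hg1, hg2⟩ := exists_perm_two' ht hkl'
    refine Finset.card_nbij'
      (fun y => (y.1.trans g, y.2.trans (Equiv.swap t3 ℓ)))
      (fun y => (y.1.trans g.symm, y.2.trans (Equiv.swap t3 ℓ)))
      ?_ ?_ ?_ ?_
    · intro y hy
      simp only [Finset.mem_coe, Finset.mem_filter, Finset.mem_univ, true_and, hf, Prod.mk.injEq] at hy ⊢
      obtain ⟨h1, h2, h3⟩ := hy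
      exact ⟨by rw [Equiv.trans_apply, h1, hg1], by rw [Equiv.trans_apply, h2, hg2],
        by rw [Equiv.trans_apply, h3, Equiv.swap_apply_left]⟩
    · intro y hy
      simp only [Finset.mem_coe, Finset.mem_filter, Finset.mem_univ, true_and, hf, Prod.mk.injEq] at hy ⊢
      obtain ⟨h1, h2, h3⟩ := hy
      exact ⟨by rw [Equiv.trans_apply, h1, ← hg1, Equiv.symm_apply_apply],
        by rw [Equiv.trans_apply, h2, ← hg2, Equiv.symm_apply_apply],
        by rw [Equiv.trans_apply, h3, Equiv.swap_apply_right]⟩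
    · intro y hy
      refine Prod.ext (Equiv.ext fun a => ?_) (Equiv.ext fun a => ?_)
      · simp [Equiv.trans_apply]
      · simp [Equiv.trans_apply, Equiv.swap_apply_self]
    · intro y hy
      refine Prod.ext (Equiv.ext fun a => ?_) (Equiv.ext fun a => ?_)
      · simp [Equiv.trans_apply]
      · simp [Equiv.trans_apply, Equiv.swap_apply_self]
  refine ⟨d, ?_, ?_, ?_⟩
  · rw [hd]
    apply Finset.card_pos.2
    exact ⟨(1, 1), by simp [hf]⟩
  · rw [Finset.card_eq_sum_card_fiberwise (f := f)
      (t := Finset.univ.filter (fun t : α × α × γ => t.1 ≠ t.2.1 ∧ R t.1 t.2.1 t.2.2))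
      (fun y hy => by
        simp only [Finset.mem_coe, Finset.mem_filter, Finset.mem_univ, true_and, hf] at hy ⊢
        exact ⟨fun h => hkl' (y.1.injective h), hy⟩)]
    rw [Finset.sum_congr rfl (fun t ht => ?_), Finset.sum_const, smul_eq_mul]
    simp only [Finset.mem_filter, Finset.mem_univ, true_and] at ht
    rw [Finset.filter_filter, ← hfib t ht.1]
    refine congrArg Finset.card (Finset.filter_congr (fun y _ => ?_))
    constructor
    · rintro ⟨-, h⟩; exact h
    · intro h
      refine ⟨?_, h⟩
      have h1 : y.1 k = t.1 := congrArg (fun u : α × α × γ => u.1) h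
      have h2 : y.1 ℓ' = t.2.1 := congrArg (fun u : α × α × γ => u.2.1) h
      have h3 : y.2 ℓ = t.2.2 := congrArg (fun u : α × α × γ => u.2.2) h
      rw [h1, h2, h3]
      exact ht.2
  · rw [← Finset.card_univ, Finset.card_eq_sum_card_fiberwise (f := f) (t := Finset.univ)
      (fun y _ => Finset.mem_univ _)]
    rw [← Finset.sum_filter_add_sum_filter_not Finset.univ
      (fun t : α × α × γ => t.1 ≠ t.2.1)]
    have h2 : ∀ t ∈ Finset.univ.filter (fun t : α × α × γ => ¬ t.1 ≠ t.2.1),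
        (Finset.univ.filter (fun y => f y = t)).card = 0 := by
      intro t ht
      simp only [Finset.mem_filter, Finset.mem_univ, true_and, not_not] at ht
      rw [Finset.card_eq_zero]
      rw [Finset.eq_empty_iff_forall_notMem]
      intro y hy
      simp only [Finset.mem_filter, Finset.mem_univ, true_and, hf] at hy
      have h1 : y.1 k = t.1 := congrArg (fun u : α × α × γ => u.1) hy
      have h2' : y.1 ℓ' = t.2.1 := congrArg (fun u : α × α × γ => u.2.1) hy
      exact hkl' (y.1.injective (by rw [h1, h2', ht]))
    rw [Finset.sum_congr rfl (fun t ht => hfib t (by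
        simpa only [Finset.mem_filter, Finset.mem_univ, true_and] using ht)),
      Finset.sum_congr rfl h2, Finset.sum_const, smul_eq_mul, Finset.sum_const_zero, add_zero]

private lemma card_Ico_fin (Nn a c : ℕ) (h : a + c ≤ Nn) :
    (Finset.univ.filter (fun x : Fin Nn => a ≤ (x : ℕ) ∧ (x : ℕ) < a + c)).card = c := by
  have himg : (Finset.univ.filter (fun x : Fin Nn => a ≤ (x : ℕ) ∧ (x : ℕ) < a + c)).image
      (Fin.val) = Finset.Ico a (a + c) := by
    ext m
    simp only [Finset.mem_image, Finset.mem_filter, Finset.mem_univ, true_and, Finset.mem_Ico]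
    constructor
    · rintro ⟨x, hx, rfl⟩; exact hx
    · rintro ⟨h1, h2⟩; exact ⟨⟨m, by omega⟩, ⟨h1, h2⟩, rfl⟩
  rw [← Finset.card_image_of_injective _ Fin.val_injective, himg, Nat.card_Ico]
  omega

private lemma card_div_eq_s6 (Nn bb pp v : ℕ) (hpp : 0 < pp) (hNn : Nn = bb * pp) (hv : v < bb) :
    (Finset.univ.filter (fun y : Fin Nn => (y : ℕ) / pp = v)).card = pp := by
  have hiff : ∀ y : Fin Nn, (y : ℕ) / pp = v ↔ v * pp ≤ (y : ℕ) ∧ (y : ℕ) < v * pp + pp := by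
    intro y
    constructor
    · rintro rfl
      refine ⟨Nat.div_mul_le_self _ _, ?_⟩
      have := (Nat.div_lt_iff_lt_mul hpp).1 (Nat.lt_succ_self ((y : ℕ) / pp))
      rwa [Nat.succ_mul] at this
    · rintro ⟨h1, h2⟩
      exact Nat.div_eq_of_lt_le h1 (by rwa [Nat.succ_mul])
  rw [Finset.filter_congr (fun y _ => hiff y)]
  refine card_Ico_fin _ _ _ ?_
  have : (v + 1) * pp ≤ bb * pp := Nat.mul_le_mul_right pp hv
  rw [Nat.succ_mul] at this
  omega

private lemma card_lt_fin (Nn c : ℕ) (h : c ≤ Nn) :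
    (Finset.univ.filter (fun x : Fin Nn => (x : ℕ) < c)).card = c := by
  calc (Finset.univ.filter (fun x : Fin Nn => (x : ℕ) < c)).card
      = (Finset.univ.filter (fun x : Fin Nn => 0 ≤ (x : ℕ) ∧ (x : ℕ) < 0 + c)).card :=
        congrArg Finset.card (Finset.filter_congr fun x _ => by simp)
    _ = c := card_Ico_fin _ _ _ (by omega)

private lemma card_filter_triple {α β γ : Type*} [Fintype α] [DecidableEq α] [Fintype β] [Fintype γ]
    (P : α → β → Prop) (Q : α → γ → Prop) [∀ a b, Decidable (P a b)] [∀ a c, Decidable (Q a c)] :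
    (Finset.univ.filter (fun t : α × β × γ => P t.1 t.2.1 ∧ Q t.1 t.2.2)).card
      = ∑ x : α, (Finset.univ.filter (P x)).card * (Finset.univ.filter (Q x)).card := by
  classical
  rw [Finset.card_eq_sum_card_fiberwise (f := fun t : α × β × γ => t.1) (t := Finset.univ)
    (fun t _ => Finset.mem_univ _)]
  refine Finset.sum_congr rfl (fun x _ => ?_)
  rw [← Finset.card_product]
  refine Finset.card_nbij' (fun t => (t.2.1, t.2.2)) (fun yz => (x, yz.1, yz.2)) ?_ ?_ ?_ ?_
  · rintro ⟨a, bb, cc⟩ ht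
    simp only [Finset.mem_coe, Finset.mem_filter, Finset.mem_univ, true_and, Finset.mem_product] at ht ⊢
    obtain ⟨⟨h1, h2⟩, h3⟩ := ht
    subst h3
    exact ⟨h1, h2⟩
  · rintro ⟨bb, cc⟩ ht
    simp only [Finset.mem_coe, Finset.mem_product, Finset.mem_filter, Finset.mem_univ, true_and] at ht ⊢
    tauto
  · rintro ⟨a, bb, cc⟩ ht
    simp only [Finset.mem_coe, Finset.mem_filter, Finset.mem_univ, true_and] at ht
    obtain ⟨-, h3⟩ := ht
    subst h3
    rfl
  · rintro ⟨bb, cc⟩ ht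
    rfl

/-- In the multi-species batch model, for two distinct species
`i ≠ j`, a particle `ℓ` of species `j` and two distinct particles `k ≠ ℓ'` of
species `i`, the probability of the joint event that the batch index of `k`
coincides with that of `ℓ` (species `j`) and with that of `ℓ'` (species `i`)
equals `min (b i) (b j) * (p i - 1) / (b i * b j * (N i - 1))`. -/
theorem mixed_species_two_particles_prob
    (n : ℕ) (hn : 2 ≤ n) (b p N : Fin n → ℕ)
    (hb : ∀ m, 1 ≤ b m) (hp : ∀ m, 2 ≤ p m) (hN : ∀ m, N m = b m * p m)
    (i j : Fin n) (hij : i ≠ j) (ℓ : Fin (N j)) (k ℓ' : Fin (N i)) (hkl' : k ≠ ℓ') :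
    ((Finset.univ.filter (fun σ : ∀ m : Fin n, Equiv.Perm (Fin (N m)) =>
        (σ i k : ℕ) / p i = (σ j ℓ : ℕ) / p j ∧
        (σ i k : ℕ) / p i = (σ i ℓ' : ℕ) / p i)).card : ℝ) /
      (Fintype.card (∀ m : Fin n, Equiv.Perm (Fin (N m))) : ℝ)
    = ((min (b i) (b j) : ℝ) * ((p i : ℝ) - 1)) /
        ((b i : ℝ) * (b j : ℝ) * ((N i : ℝ) - 1)) := by
  classical
  have hNi : N i = b i * p i := hN i
  have hNj : N j = b j * p j := hN j
  have hpi : 0 < p i := by have := hp i; omega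
  have hpj : 0 < p j := by have := hp j; omega
  have hbi : 0 < b i := hb i
  have hbj : 0 < b j := hb j
  have hNi2 : 2 ≤ N i := by
    rw [hNi]
    calc 2 = 1 * 2 := by norm_num
    _ ≤ b i * p i := Nat.mul_le_mul (hb i) (hp i)
  have hNj1 : 0 < N j := by rw [hNj]; positivity
  -- Step 1: reduce to the two coordinates i, j
  obtain ⟨c, hc0, hnum, hden⟩ := pi_two_coord_count (β := fun m => Equiv.Perm (Fin (N m))) hij
    (fun τ ρ => (τ k : ℕ) / p i = (ρ ℓ : ℕ) / p j ∧ (τ k : ℕ) / p i = (τ ℓ' : ℕ) / p i)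
  -- Step 2: reduce to the value triple
  obtain ⟨d, hd0, hpair, htot⟩ := perm_pair_count k ℓ' hkl' ℓ
    (fun x y z => (x : ℕ) / p i = (z : ℕ) / p j ∧ (x : ℕ) / p i = (y : ℕ) / p i)
  -- Step 3a : count triples satisfying the event
  have htrip : (Finset.univ.filter (fun t : Fin (N i) × Fin (N i) × Fin (N j) =>
      t.1 ≠ t.2.1 ∧ ((t.1 : ℕ) / p i = (t.2.2 : ℕ) / p j ∧
        (t.1 : ℕ) / p i = (t.2.1 : ℕ) / p i))).card
      = (min (b i) (b j) * p i) * ((p i - 1) * p j) := by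
    have hre : (Finset.univ.filter (fun t : Fin (N i) × Fin (N i) × Fin (N j) =>
        t.1 ≠ t.2.1 ∧ ((t.1 : ℕ) / p i = (t.2.2 : ℕ) / p j ∧
          (t.1 : ℕ) / p i = (t.2.1 : ℕ) / p i)))
        = (Finset.univ.filter (fun t : Fin (N i) × Fin (N i) × Fin (N j) =>
          (t.1 ≠ t.2.1 ∧ (t.1 : ℕ) / p i = (t.2.1 : ℕ) / p i) ∧
          (t.1 : ℕ) / p i = (t.2.2 : ℕ) / p j)) := by
      refine Finset.filter_congr (fun t _ => ?_)
      tauto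
    rw [hre, card_filter_triple
      (fun (x y : Fin (N i)) => x ≠ y ∧ (x : ℕ) / p i = (y : ℕ) / p i)
      (fun (x : Fin (N i)) (z : Fin (N j)) => (x : ℕ) / p i = (z : ℕ) / p j)]
    have hA : ∀ x : Fin (N i),
        (Finset.univ.filter (fun y : Fin (N i) => x ≠ y ∧ (x : ℕ) / p i = (y : ℕ) / p i)).card
          = p i - 1 := by
      intro x
      have hxlt : (x : ℕ) / p i < b i := by
        rw [Nat.div_lt_iff_lt_mul hpi, ← hNi]
        exact x.2
      have hset : (Finset.univ.filter
          (fun y : Fin (N i) => x ≠ y ∧ (x : ℕ) / p i = (y : ℕ) / p i))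
          = (Finset.univ.filter (fun y : Fin (N i) => (y : ℕ) / p i = (x : ℕ) / p i)).erase x := by
        ext y
        simp only [Finset.mem_filter, Finset.mem_univ, true_and, Finset.mem_erase]
        constructor
        · rintro ⟨h1, h2⟩; exact ⟨Ne.symm h1, h2.symm⟩
        · rintro ⟨h1, h2⟩; exact ⟨Ne.symm h1, h2.symm⟩
      rw [hset, Finset.card_erase_of_mem (by simp), card_div_eq_s6 (N i) (b i) (p i) _ hpi hNi hxlt]
    have hB : ∀ x : Fin (N i),
        (Finset.univ.filter (fun z : Fin (N j) => (x : ℕ) / p i = (z : ℕ) / p j)).card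
          = if (x : ℕ) / p i < b j then p j else 0 := by
      intro x
      by_cases hcase : (x : ℕ) / p i < b j
      · rw [if_pos hcase]
        calc (Finset.univ.filter (fun z : Fin (N j) => (x : ℕ) / p i = (z : ℕ) / p j)).card
            = (Finset.univ.filter (fun z : Fin (N j) => (z : ℕ) / p j = (x : ℕ) / p i)).card :=
              congrArg Finset.card (Finset.filter_congr fun z _ => eq_comm)
          _ = p j := card_div_eq_s6 (N j) (b j) (p j) _ hpj hNj hcase
      · rw [if_neg hcase, Finset.card_eq_zero, Finset.eq_empty_iff_forall_notMem]
        intro z hz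
        simp only [Finset.mem_filter, Finset.mem_univ, true_and] at hz
        apply hcase
        rw [hz, Nat.div_lt_iff_lt_mul hpj, ← hNj]
        exact z.2
    calc ∑ x : Fin (N i),
          (Finset.univ.filter (fun y : Fin (N i) => x ≠ y ∧ (x : ℕ) / p i = (y : ℕ) / p i)).card *
          (Finset.univ.filter (fun z : Fin (N j) => (x : ℕ) / p i = (z : ℕ) / p j)).card
        = ∑ x : Fin (N i), (if (x : ℕ) / p i < b j then (p i - 1) * p j else 0) := by
          refine Finset.sum_congr rfl (fun x _ => ?_)
          rw [hA x, hB x]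
          by_cases hcase : (x : ℕ) / p i < b j
          · rw [if_pos hcase, if_pos hcase]
          · rw [if_neg hcase, if_neg hcase, Nat.mul_zero]
      _ = (Finset.univ.filter (fun x : Fin (N i) => (x : ℕ) / p i < b j)).card *
            ((p i - 1) * p j) := by
          rw [← Finset.sum_filter, Finset.sum_const, smul_eq_mul]
      _ = (min (b i) (b j) * p i) * ((p i - 1) * p j) := by
          congr 1
          have hflt : (Finset.univ.filter (fun x : Fin (N i) => (x : ℕ) / p i < b j))
              = (Finset.univ.filter (fun x : Fin (N i) => (x : ℕ) < min (b i) (b j) * p i)) := by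
            refine Finset.filter_congr (fun x _ => ?_)
            have hx : (x : ℕ) < b i * p i := by rw [← hNi]; exact x.2
            rw [Nat.div_lt_iff_lt_mul hpi]
            constructor
            · intro hlt
              rcases le_total (b i) (b j) with hbb | hbb
              · rw [min_eq_left hbb]; exact hx
              · rw [min_eq_right hbb]; exact hlt
            · intro hlt
              rcases le_total (b i) (b j) with hbb | hbb
              · rw [min_eq_left hbb] at hlt
                exact lt_of_lt_of_le hlt (Nat.mul_le_mul_right _ hbb)
              · rw [min_eq_right hbb] at hlt; exact hlt
          rw [hflt, card_lt_fin _ _ (by rw [hNi]; exact Nat.mul_le_mul_right _ (min_le_left _ _))]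
  -- Step 3b : count all triples with distinct first two coordinates
  have hne : (Finset.univ.filter (fun t : Fin (N i) × Fin (N i) × Fin (N j) =>
      t.1 ≠ t.2.1)).card = N i * ((N i - 1) * N j) := by
    have hre : (Finset.univ.filter (fun t : Fin (N i) × Fin (N i) × Fin (N j) => t.1 ≠ t.2.1))
        = (Finset.univ.filter (fun t : Fin (N i) × Fin (N i) × Fin (N j) =>
          t.1 ≠ t.2.1 ∧ True)) := by
      refine Finset.filter_congr (fun t _ => ?_)
      tauto
    rw [hre, card_filter_triple
      (fun (x y : Fin (N i)) => x ≠ y)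
      (fun (_ : Fin (N i)) (_ : Fin (N j)) => True)]
    have : ∀ x : Fin (N i),
        (Finset.univ.filter (fun y : Fin (N i) => x ≠ y)).card *
        (Finset.univ.filter (fun _ : Fin (N j) => True)).card = (N i - 1) * N j := by
      intro x
      congr 1
      · have : (Finset.univ.filter (fun y : Fin (N i) => x ≠ y)) = Finset.univ.erase x := by
          ext y
          simp [ne_comm]
        rw [this, Finset.card_erase_of_mem (Finset.mem_univ x), Finset.card_univ,
          Fintype.card_fin]
      · rw [Finset.filter_true, Finset.card_univ, Fintype.card_fin]
    rw [Finset.sum_congr rfl (fun x _ => this x), Finset.sum_const, smul_eq_mul,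
      Finset.card_univ, Fintype.card_fin]
  -- Assemble the counts
  have hNum : (Finset.univ.filter (fun σ : ∀ m : Fin n, Equiv.Perm (Fin (N m)) =>
      (σ i k : ℕ) / p i = (σ j ℓ : ℕ) / p j ∧
      (σ i k : ℕ) / p i = (σ i ℓ' : ℕ) / p i)).card
      = (min (b i) (b j) * p i) * ((p i - 1) * p j) * d * c := by
    rw [hnum, hpair, htrip]
  have hDen : Fintype.card (∀ m : Fin n, Equiv.Perm (Fin (N m)))
      = N i * ((N i - 1) * N j) * d * c := by
    rw [hden, htot, hne]
  rw [hNum, hDen]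
  have hc0' : (0 : ℝ) < (c : ℝ) := by exact_mod_cast hc0
  have hd0' : (0 : ℝ) < (d : ℝ) := by exact_mod_cast hd0
  have hNiR : (N i : ℝ) = (b i : ℝ) * (p i : ℝ) := by exact_mod_cast hNi
  have hNjR : (N j : ℝ) = (b j : ℝ) * (p j : ℝ) := by exact_mod_cast hNj
  have hcastNi : ((N i - 1 : ℕ) : ℝ) = (N i : ℝ) - 1 := by
    have h1 : 1 ≤ N i := le_trans (by norm_num) hNi2
    rw [Nat.cast_sub h1, Nat.cast_one]
  have hcastpi : ((p i - 1 : ℕ) : ℝ) = (p i : ℝ) - 1 := by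
    have h1 : 1 ≤ p i := hpi
    rw [Nat.cast_sub h1, Nat.cast_one]
  push_cast [hcastNi, hcastpi, Nat.cast_min]
  have hNi1R : (1 : ℝ) < (N i : ℝ) := by exact_mod_cast hNi2
  have hpiR : (0 : ℝ) < (p i : ℝ) := by exact_mod_cast hpi
  have hpjR : (0 : ℝ) < (p j : ℝ) := by exact_mod_cast hpj
  have hbiR : (0 : ℝ) < (b i : ℝ) := by exact_mod_cast hbi
  have hbjR : (0 : ℝ) < (b j : ℝ) := by exact_mod_cast hbj
  have hbig : (1 : ℝ) < (b i : ℝ) * (p i : ℝ) := by rw [← hNiR]; exact hNi1R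
  rw [hNiR, hNjR]
  have h1 : (b i : ℝ) * (p i : ℝ) - 1 ≠ 0 := by linarith
  have h2 : (b i : ℝ) ≠ 0 := ne_of_gt hbiR
  have h3 : (b j : ℝ) ≠ 0 := ne_of_gt hbjR
  have h4 : (p i : ℝ) ≠ 0 := ne_of_gt hpiR
  have h5 : (p j : ℝ) ≠ 0 := ne_of_gt hpjR
  have h6 : (c : ℝ) ≠ 0 := ne_of_gt hc0'
  have h7 : (d : ℝ) ≠ 0 := ne_of_gt hd0'
  field_simp
end

section
/- (Consistency of the random-batch force, Proposition 2.1, first part.) In the multi-species batch model with deterministic positions x and kernels K_ij, for every species i and particle k of species i, the expectation of the random-batch remainder vanishes: E[χ_i^k(x)] = 0; equivalently, the expectation of the random-batch interaction force f_i^k(x) = Σ_j β_ij Σ_{ℓ: a_j(ℓ)=a_i(k), (j,ℓ)≠(i,k)} K_ij(x_i^k − x_j^ℓ) equals the full interaction force g_i^k(x) = Σ_j α_ij Σ_{ℓ, (j,ℓ)≠(i,k)} K_ij(x_i^k − x_j^ℓ). -/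
open Finset

lemma card_pi_split {ι : Type*} [DecidableEq ι] [Fintype ι] (β : ι → Type*)
    [∀ i, Fintype (β i)] (j : ι) :
    Fintype.card (∀ m, β m)
      = Fintype.card (β j) * Fintype.card (∀ m : {m // m ≠ j}, β m) := by
  rw [Fintype.card_congr (Equiv.piSplitAt j β), Fintype.card_prod]

lemma sum_pi_coord_aux {ι : Type*} [DecidableEq ι] [Fintype ι] (β : ι → Type*)
    [∀ i, Fintype (β i)] (j : ι) (g : β j → ℝ) :
    ∑ f : ∀ m, β m, g (f j)
      = (Fintype.card (∀ m : {m // m ≠ j}, β m) : ℝ) * ∑ y, g y := by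
  rw [← Equiv.sum_comp (Equiv.piSplitAt j β).symm (fun f => g (f j))]
  simp [Fintype.sum_prod_type, mul_sum, mul_comm]
  rw [Finset.sum_mul]

lemma sum_pi_coord_one {ι : Type*} [DecidableEq ι] [Fintype ι] (β : ι → Type*)
    [∀ i, Fintype (β i)] (j : ι) (g : β j → ℝ) :
    (Fintype.card (β j) : ℝ) * ∑ f : ∀ m, β m, g (f j)
      = (Fintype.card (∀ m, β m) : ℝ) * ∑ y, g y := by
  rw [sum_pi_coord_aux, card_pi_split β j]
  push_cast; ring

lemma sum_pi_coord_two {ι : Type*} [DecidableEq ι] [Fintype ι] (β : ι → Type*)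
    [∀ i, Fintype (β i)] (i j : ι) (hij : i ≠ j) (F : β i → β j → ℝ) :
    (Fintype.card (β i) : ℝ) * (Fintype.card (β j) : ℝ) * ∑ f : ∀ m, β m, F (f i) (f j)
      = (Fintype.card (∀ m, β m) : ℝ) * ∑ y : β i, ∑ z : β j, F y z := by
  have hji : (⟨j, Ne.symm hij⟩ : {m // m ≠ i}) = ⟨j, Ne.symm hij⟩ := rfl
  have step : ∑ f : ∀ m, β m, F (f i) (f j)
      = ∑ y : β i, ∑ r : ∀ m : {m // m ≠ i}, β m, F y (r ⟨j, Ne.symm hij⟩) := by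
    rw [← Equiv.sum_comp (Equiv.piSplitAt i β).symm (fun f => F (f i) (f j))]
    simp [Fintype.sum_prod_type, Ne.symm hij]
  have inner : ∀ y : β i,
      (Fintype.card (β j) : ℝ) * ∑ r : ∀ m : {m // m ≠ i}, β m, F y (r ⟨j, Ne.symm hij⟩)
        = (Fintype.card (∀ m : {m // m ≠ i}, β m) : ℝ) * ∑ z, F y z := fun y =>
    sum_pi_coord_one (fun m : {m // m ≠ i} => β m) ⟨j, Ne.symm hij⟩ (fun z => F y z)
  rw [step, mul_assoc, mul_sum]
  calc (Fintype.card (β i) : ℝ) * ∑ y, (Fintype.card (β j) : ℝ) *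
        ∑ r : ∀ m : {m // m ≠ i}, β m, F y (r ⟨j, Ne.symm hij⟩)
      = (Fintype.card (β i) : ℝ) * ∑ y, (Fintype.card (∀ m : {m // m ≠ i}, β m) : ℝ) * ∑ z, F y z := by
        rw [Finset.sum_congr rfl (fun y _ => inner y)]
    _ = (Fintype.card (∀ m, β m) : ℝ) * ∑ y : β i, ∑ z : β j, F y z := by
        rw [card_pi_split β i]
        push_cast
        rw [Finset.mul_sum, Finset.mul_sum]
        exact Finset.sum_congr rfl (fun y _ => by ring)

lemma perm_sum_one (N : ℕ) (hN : 1 ≤ N) (k : Fin N) (h : Fin N → ℝ) :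
    ∑ σ : Equiv.Perm (Fin N), h (σ k)
      = ((N - 1).factorial : ℝ) * ∑ v, h v := by
  obtain ⟨m, rfl⟩ : ∃ m, N = m + 1 := ⟨N - 1, by omega⟩
  have h1 : ∑ σ : Equiv.Perm (Fin (m+1)), h (σ k)
      = ∑ σ : Equiv.Perm (Fin (m+1)), h (σ 0) := by
    rw [← Equiv.sum_comp (Equiv.mulRight (Equiv.swap 0 k)) (fun σ => h (σ 0))]
    simp [Equiv.Perm.mul_apply]
  rw [h1, ← Equiv.sum_comp (Equiv.Perm.decomposeFin (n := m)).symm (fun σ => h (σ 0))]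
  simp [Fintype.sum_prod_type, Fintype.card_perm, mul_comm, sum_mul, mul_sum]

lemma perm_sum_two (N : ℕ) (hN : 2 ≤ N) (k l : Fin N) (hkl : k ≠ l)
    (h : Fin N → Fin N → ℝ) :
    ∑ σ : Equiv.Perm (Fin N), h (σ k) (σ l)
      = ((N - 2).factorial : ℝ) * ∑ q, ((∑ u, h q u) - h q q) := by
  obtain ⟨m, rfl⟩ : ∃ m, N = m + 2 := ⟨N - 2, by omega⟩
  set π₁ := Equiv.swap (0 : Fin (m+2)) k with hπ₁
  set l' := π₁.symm l with hl'
  have hl'0 : l' ≠ 0 := by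
    intro hc
    apply hkl
    have h2 : l = π₁ 0 := by rw [← hc, hl']; simp
    have h3 : π₁ 0 = k := Equiv.swap_apply_left 0 k
    rw [h3] at h2; exact h2.symm
  set π : Equiv.Perm (Fin (m+2)) := π₁ * Equiv.swap 1 l' with hπ
  have hπ0 : π 0 = k := by
    rw [hπ, Equiv.Perm.mul_apply,
      Equiv.swap_apply_of_ne_of_ne Fin.zero_ne_one (Ne.symm hl'0), hπ₁]
    exact Equiv.swap_apply_left 0 k
  have hπ1 : π 1 = l := by
    rw [hπ, Equiv.Perm.mul_apply, Equiv.swap_apply_left, hl']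
    exact π₁.apply_symm_apply l
  have step1 : ∑ σ : Equiv.Perm (Fin (m+2)), h (σ k) (σ l)
      = ∑ σ : Equiv.Perm (Fin (m+2)), h (σ 0) (σ 1) := by
    rw [← Equiv.sum_comp (Equiv.mulRight π) (fun σ => h (σ 0) (σ 1))]
    simp only [Equiv.coe_mulRight, Equiv.Perm.mul_apply, hπ0, hπ1]
  rw [step1,
    ← Equiv.sum_comp (Equiv.Perm.decomposeFin (n := m+1)).symm (fun σ => h (σ 0) (σ 1))]
  rw [Fintype.sum_prod_type]
  simp only [Equiv.Perm.decomposeFin_symm_apply_zero, Equiv.Perm.decomposeFin_symm_apply_one]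
  have inner : ∀ q : Fin (m+2), ∑ ρ : Equiv.Perm (Fin (m+1)),
      h q (Equiv.swap 0 q (ρ 0).succ) = (m.factorial : ℝ) * ((∑ u, h q u) - h q q) := by
    intro q
    rw [perm_sum_one (m+1) (by omega) 0 (fun v => h q (Equiv.swap 0 q v.succ))]
    have e1 : ∑ u : Fin (m+2), h q u
        = ∑ u : Fin (m+2), h q (Equiv.swap 0 q u) :=
      (Equiv.sum_comp (Equiv.swap 0 q) (h q)).symm
    have e2 : ∑ u : Fin (m+2), h q (Equiv.swap 0 q u)
        = h q q + ∑ v : Fin (m+1), h q (Equiv.swap 0 q v.succ) := by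
      rw [Fin.sum_univ_succ]
      simp
    rw [e1, e2]
    simp only [Nat.add_sub_cancel]
    ring
  rw [Finset.sum_congr rfl (fun q _ => inner q), ← Finset.mul_sum]
  norm_num

lemma fin_div_sum (b q : ℕ) (hq : 1 ≤ q) (g : ℕ → ℝ) :
    ∑ u : Fin (b * q), g ((u : ℕ) / q)
      = ∑ a ∈ Finset.range b, (q : ℝ) * g a := by
  rw [← Equiv.sum_comp (finProdFinEquiv (m := b) (n := q))
    (fun u : Fin (b * q) => g ((u : ℕ) / q))]
  rw [Fintype.sum_prod_type]
  rw [← Fin.sum_univ_eq_sum_range (fun a => (q : ℝ) * g a) b]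
  refine Finset.sum_congr rfl fun a _ => ?_
  have : ∀ c : Fin q, ((finProdFinEquiv (a, c) : ℕ)) / q = a := by
    intro c
    simp only [finProdFinEquiv_apply_val]
    rw [Nat.add_mul_div_left _ _ (by omega), Nat.div_eq_of_lt c.2]
    omega
  rw [Finset.sum_congr rfl (fun c _ => by rw [this c])]
  simp [mul_comm]

lemma batch_count (b q N : ℕ) (hq : 1 ≤ q) (h : N = b * q) (a : ℕ) :
    ∑ v : Fin N, (if (v : ℕ) / q = a then (1 : ℝ) else 0)
      = if a < b then (q : ℝ) else 0 := by
  subst h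
  rw [fin_div_sum b q hq (fun m => if m = a then (1 : ℝ) else 0)]
  simp only [mul_ite, mul_one, mul_zero]
  rw [Finset.sum_ite_eq' (Finset.range b) a (fun _ => (q : ℝ))]
  simp [Finset.mem_range]

lemma range_filter_lt (b c : ℕ) :
    ∑ a ∈ Finset.range b, (if a < c then (1 : ℝ) else 0) = (min b c : ℕ) := by
  rw [Finset.sum_ite, Finset.sum_const, Finset.sum_const]
  have : Finset.filter (fun a => a < c) (Finset.range b) = Finset.range (min b c) := by
    ext a
    simp only [Finset.mem_filter, Finset.mem_range, lt_min_iff]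
  simp [this]

lemma fin_div_sum' (b q N : ℕ) (hq : 1 ≤ q) (h : N = b * q) (g : ℕ → ℝ) :
    ∑ u : Fin N, g ((u : ℕ) / q) = ∑ a ∈ Finset.range b, (q : ℝ) * g a := by
  subst h; exact fin_div_sum b q hq g
lemma key_case_ne (n : ℕ) (b p N : Fin n → ℕ)
    (hb : ∀ m, 1 ≤ b m) (hp : ∀ m, 2 ≤ p m) (hN : ∀ m, N m = b m * p m)
    (i j : Fin n) (hij : i ≠ j) (k : Fin (N i)) (ℓ : Fin (N j)) :
    ((b i : ℝ) / ((p j : ℝ) * min (b i : ℝ) (b j : ℝ))) *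
      ∑ σ : ∀ m : Fin n, Equiv.Perm (Fin (N m)),
        (if (σ j ℓ : ℕ) / p j = (σ i k : ℕ) / p i then (1 : ℝ) else 0)
    = ((N j : ℝ))⁻¹ * (Fintype.card (∀ m : Fin n, Equiv.Perm (Fin (N m))) : ℝ) := by
  have hbi := hb i; have hbj := hb j; have hpi := hp i; have hpj := hp j
  have hNi := hN i; have hNj := hN j
  set w : ℝ := ∑ σ : ∀ m : Fin n, Equiv.Perm (Fin (N m)),
      (if (σ j ℓ : ℕ) / p j = (σ i k : ℕ) / p i then (1 : ℝ) else 0) with hw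
  set c : ℝ := (Fintype.card (∀ m : Fin n, Equiv.Perm (Fin (N m))) : ℝ) with hc
  -- main counting identity
  have E : ((N i).factorial : ℝ) * ((N j).factorial : ℝ) * w
      = c * (((N i - 1).factorial : ℝ) * ((N j - 1).factorial : ℝ)
          * ((p i : ℝ) * (p j : ℝ) * (min (b i) (b j) : ℕ))) := by
    have h2 := sum_pi_coord_two (fun m => Equiv.Perm (Fin (N m))) i j hij
      (fun τ ρ => if (ρ ℓ : ℕ) / p j = (τ k : ℕ) / p i then (1 : ℝ) else 0)
    simp only [Fintype.card_perm, Fintype.card_fin] at h2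
    rw [hw, h2, hc]
    have inner : ∀ τ : Equiv.Perm (Fin (N i)),
        (∑ ρ : Equiv.Perm (Fin (N j)),
          if (ρ ℓ : ℕ) / p j = (τ k : ℕ) / p i then (1 : ℝ) else 0)
        = ((N j - 1).factorial : ℝ) *
            (if (τ k : ℕ) / p i < b j then (p j : ℝ) else 0) := by
      intro τ
      rw [perm_sum_one (N j) (by nlinarith) ℓ
        (fun v => if (v : ℕ) / p j = (τ k : ℕ) / p i then (1 : ℝ) else 0)]
      rw [batch_count (b j) (p j) (N j) (by omega) hNj ((τ k : ℕ) / p i)]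
    rw [Finset.sum_congr rfl (fun τ _ => inner τ), ← Finset.mul_sum]
    rw [perm_sum_one (N i) (by nlinarith) k
      (fun u => if (u : ℕ) / p i < b j then (p j : ℝ) else 0)]
    rw [fin_div_sum' (b i) (p i) (N i) (by omega) hNi
      (fun a => if a < b j then (p j : ℝ) else 0)]
    have rearr : ∀ a : ℕ, (p i : ℝ) * (if a < b j then (p j : ℝ) else 0)
        = ((p i : ℝ) * (p j : ℝ)) * (if a < b j then (1 : ℝ) else 0) := by
      intro a; split <;> ring
    rw [Finset.sum_congr rfl (fun a _ => rearr a), ← Finset.mul_sum, range_filter_lt]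
    ring
  -- algebra
  have fNi : ((N i).factorial : ℝ) = (N i : ℝ) * ((N i - 1).factorial : ℝ) := by
    rw_mod_cast [Nat.mul_factorial_pred (by nlinarith)]
  have fNj : ((N j).factorial : ℝ) = (N j : ℝ) * ((N j - 1).factorial : ℝ) := by
    rw_mod_cast [Nat.mul_factorial_pred (by nlinarith)]
  rw [fNi, fNj] at E
  have hNi' : (N i : ℝ) = (b i : ℝ) * (p i : ℝ) := by rw [hNi]; push_cast; ring
  have hNj' : (N j : ℝ) = (b j : ℝ) * (p j : ℝ) := by rw [hNj]; push_cast; ring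
  have hmin : min (b i : ℝ) (b j : ℝ) = ((min (b i) (b j) : ℕ) : ℝ) := by
    rw [Nat.cast_min]
  have hfi : ((N i - 1).factorial : ℝ) ≠ 0 := by positivity
  have hfj : ((N j - 1).factorial : ℝ) ≠ 0 := by positivity
  have hpi0 : (p i : ℝ) ≠ 0 := by positivity
  have hpj0 : (p j : ℝ) ≠ 0 := by positivity
  have hbi0 : (b i : ℝ) ≠ 0 := by positivity
  have hbj0 : (b j : ℝ) ≠ 0 := by positivity
  have hmin0 : ((min (b i) (b j) : ℕ) : ℝ) ≠ 0 := by
    have : 1 ≤ min (b i) (b j) := le_min hbi hbj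
    positivity
  -- from E derive b i * b j * w = c * min
  have E2 : (b i : ℝ) * (b j : ℝ) * w = c * ((min (b i) (b j) : ℕ) : ℝ) := by
    rw [hNi', hNj'] at E
    apply mul_left_cancel₀ (show (((N i - 1).factorial : ℝ) * ((N j - 1).factorial : ℝ)
      * (p i : ℝ) * (p j : ℝ)) ≠ 0 by positivity)
    linear_combination E
  rw [hmin, hNj']
  field_simp
  linear_combination E2

lemma key_case_eq (n : ℕ) (b p N : Fin n → ℕ)
    (hb : ∀ m, 1 ≤ b m) (hp : ∀ m, 2 ≤ p m) (hN : ∀ m, N m = b m * p m)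
    (i : Fin n) (k ℓ : Fin (N i)) (hlk : ℓ ≠ k) :
    ((b i : ℝ) / (((p i : ℝ) - 1) * min (b i : ℝ) (b i : ℝ))) *
      ∑ σ : ∀ m : Fin n, Equiv.Perm (Fin (N m)),
        (if (σ i ℓ : ℕ) / p i = (σ i k : ℕ) / p i then (1 : ℝ) else 0)
    = ((N i : ℝ) - 1)⁻¹ * (Fintype.card (∀ m : Fin n, Equiv.Perm (Fin (N m))) : ℝ) := by
  have hbi := hb i; have hpi := hp i; have hNi := hN i
  have hNi2 : 2 ≤ N i := by nlinarith
  set w : ℝ := ∑ σ : ∀ m : Fin n, Equiv.Perm (Fin (N m)),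
      (if (σ i ℓ : ℕ) / p i = (σ i k : ℕ) / p i then (1 : ℝ) else 0) with hw
  set c : ℝ := (Fintype.card (∀ m : Fin n, Equiv.Perm (Fin (N m))) : ℝ) with hc
  have E : ((N i).factorial : ℝ) * w
      = c * (((N i - 2).factorial : ℝ) * ((N i : ℝ) * ((p i : ℝ) - 1))) := by
    have h1 := sum_pi_coord_one (fun m => Equiv.Perm (Fin (N m))) i
      (fun τ => if (τ ℓ : ℕ) / p i = (τ k : ℕ) / p i then (1 : ℝ) else 0)
    simp only [Fintype.card_perm, Fintype.card_fin] at h1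
    rw [hw, h1, hc]
    rw [perm_sum_two (N i) hNi2 ℓ k hlk
      (fun u v => if (u : ℕ) / p i = (v : ℕ) / p i then (1 : ℝ) else 0)]
    have inner : ∀ q : Fin (N i),
        ((∑ u : Fin (N i), if (q : ℕ) / p i = (u : ℕ) / p i then (1 : ℝ) else 0)
          - (if (q : ℕ) / p i = (q : ℕ) / p i then (1 : ℝ) else 0))
        = (p i : ℝ) - 1 := by
      intro q
      have e1 : (∑ u : Fin (N i), if (q : ℕ) / p i = (u : ℕ) / p i then (1 : ℝ) else 0)
          = ∑ u : Fin (N i), if (u : ℕ) / p i = (q : ℕ) / p i then (1 : ℝ) else 0 :=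
        Finset.sum_congr rfl (fun u _ => if_congr eq_comm rfl rfl)
      rw [e1, batch_count (b i) (p i) (N i) (by omega) hNi ((q : ℕ) / p i)]
      have hqlt : (q : ℕ) / p i < b i := by
        rw [Nat.div_lt_iff_lt_mul (by omega)]
        have := q.2
        omega
      rw [if_pos hqlt, if_pos rfl]
    rw [Finset.sum_congr rfl (fun q _ => inner q), Finset.sum_const, Finset.card_univ,
      Fintype.card_fin, nsmul_eq_mul]
  -- algebra
  have h1le : 1 ≤ N i - 1 := by omega
  have fN1 : ((N i).factorial : ℝ) = (N i : ℝ) * ((N i - 1).factorial : ℝ) := by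
    rw_mod_cast [Nat.mul_factorial_pred (by omega)]
  have fN2 : ((N i - 1).factorial : ℝ) = ((N i : ℝ) - 1) * ((N i - 2).factorial : ℝ) := by
    have h2 : (N i - 1) * (N i - 2).factorial = (N i - 1).factorial := by
      have h3 := Nat.mul_factorial_pred (n := N i - 1) (by omega)
      simpa [show N i - 1 - 1 = N i - 2 by omega] using h3
    rw [← h2]
    push_cast [Nat.cast_sub (show 1 ≤ N i by omega)]
    ring
  rw [fN1, fN2] at E
  have hNr : (2 : ℝ) ≤ (N i : ℝ) := by exact_mod_cast hNi2
  have hpr : (2 : ℝ) ≤ (p i : ℝ) := by exact_mod_cast hpi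
  have hf2 : ((N i - 2).factorial : ℝ) ≠ 0 := by positivity
  have hN0 : (N i : ℝ) ≠ 0 := by positivity
  have hN1 : (N i : ℝ) - 1 ≠ 0 := by nlinarith
  have hp1 : (p i : ℝ) - 1 ≠ 0 := by nlinarith
  have hbi0 : (b i : ℝ) ≠ 0 := by positivity
  have E2 : ((N i : ℝ) - 1) * w = c * ((p i : ℝ) - 1) := by
    apply mul_left_cancel₀ (show (N i : ℝ) * ((N i - 2).factorial : ℝ) ≠ 0 by positivity)
    linear_combination E
  rw [min_self]
  field_simp
  linear_combination E2

/-- **Consistency, Proposition 2.1, first part.** In the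
multi-species batch model, with deterministic positions `x` and kernels `K i j`,
the expectation (under the product of the uniform measures on the permutation
groups) of the random-batch remainder
`χ_i^k = Σ_j β i j • Σ_{ℓ in the same super-batch, (j,ℓ) ≠ (i,k)} K i j (x i k - x j ℓ)
  - Σ_j α i j • Σ_{(j,ℓ) ≠ (i,k)} K i j (x i k - x j ℓ)`
vanishes, where `α i j = 1/(N j - δ_ij)` and
`β i j = b i / ((p j - δ_ij) * min (b i) (b j))`. -/
theorem random_batch_consistency
    (n : ℕ) (hn : 1 ≤ n) (d : ℕ) (b p N : Fin n → ℕ)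
    (hb : ∀ m, 1 ≤ b m) (hp : ∀ m, 2 ≤ p m) (hN : ∀ m, N m = b m * p m)
    (x : ∀ j : Fin n, Fin (N j) → EuclideanSpace ℝ (Fin d))
    (K : Fin n → Fin n → EuclideanSpace ℝ (Fin d) → EuclideanSpace ℝ (Fin d))
    (i : Fin n) (k : Fin (N i)) :
    (Fintype.card (∀ m : Fin n, Equiv.Perm (Fin (N m))) : ℝ)⁻¹ •
      ∑ σ : ∀ m : Fin n, Equiv.Perm (Fin (N m)),
        ((∑ j : Fin n,
            ((b i : ℝ) / (((p j : ℝ) - if i = j then 1 else 0) * (min (b i) (b j) : ℝ))) •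
              ∑ ℓ ∈ Finset.univ.filter (fun ℓ : Fin (N j) =>
                  (σ j ℓ : ℕ) / p j = (σ i k : ℕ) / p i ∧
                  (⟨j, ℓ⟩ : Σ m : Fin n, Fin (N m)) ≠ ⟨i, k⟩),
                K i j (x i k - x j ℓ))
          - ∑ j : Fin n,
              (((N j : ℝ) - if i = j then 1 else 0))⁻¹ •
                ∑ ℓ ∈ Finset.univ.filter (fun ℓ : Fin (N j) =>
                    (⟨j, ℓ⟩ : Σ m : Fin n, Fin (N m)) ≠ ⟨i, k⟩),
                  K i j (x i k - x j ℓ))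
    = 0 := by
  have key : ∀ (j : Fin n) (ℓ : Fin (N j)),
      (⟨j, ℓ⟩ : Σ m : Fin n, Fin (N m)) ≠ ⟨i, k⟩ →
      ((b i : ℝ) / (((p j : ℝ) - if i = j then 1 else 0) * (min (b i : ℝ) (b j : ℝ)))) *
        (∑ σ : ∀ m : Fin n, Equiv.Perm (Fin (N m)),
          if (σ j ℓ : ℕ) / p j = (σ i k : ℕ) / p i then (1 : ℝ) else 0)
      = (((N j : ℝ) - if i = j then 1 else 0))⁻¹ *
        (Fintype.card (∀ m : Fin n, Equiv.Perm (Fin (N m))) : ℝ) := by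
    intro j ℓ hne
    by_cases hij : i = j
    · subst hij
      simp only [if_pos rfl]
      have hlk : ℓ ≠ k := fun h => hne (by rw [h])
      exact key_case_eq n b p N hb hp hN i k ℓ hlk
    · simp only [if_neg hij, sub_zero]
      exact key_case_ne n b p N hb hp hN i j hij k ℓ
  rw [Finset.sum_sub_distrib, Finset.sum_const, Finset.card_univ,
    ← Nat.cast_smul_eq_nsmul ℝ (Fintype.card (∀ m : Fin n, Equiv.Perm (Fin (N m))))]
  have hS : (∑ σ : ∀ m : Fin n, Equiv.Perm (Fin (N m)),
        ∑ j : Fin n,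
          ((b i : ℝ) / (((p j : ℝ) - if i = j then 1 else 0) * (min (b i) (b j) : ℝ))) •
            ∑ ℓ ∈ Finset.univ.filter (fun ℓ : Fin (N j) =>
                (σ j ℓ : ℕ) / p j = (σ i k : ℕ) / p i ∧
                (⟨j, ℓ⟩ : Σ m : Fin n, Fin (N m)) ≠ ⟨i, k⟩),
              K i j (x i k - x j ℓ))
      = (Fintype.card (∀ m : Fin n, Equiv.Perm (Fin (N m))) : ℝ) •
          ∑ j : Fin n,
            (((N j : ℝ) - if i = j then 1 else 0))⁻¹ •
              ∑ ℓ ∈ Finset.univ.filter (fun ℓ : Fin (N j) =>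
                  (⟨j, ℓ⟩ : Σ m : Fin n, Fin (N m)) ≠ ⟨i, k⟩),
                K i j (x i k - x j ℓ) := by
    rw [Finset.sum_comm, Finset.smul_sum]
    refine Finset.sum_congr rfl fun j _ => ?_
    rw [← Finset.smul_sum]
    have e1 : ∀ σ : ∀ m : Fin n, Equiv.Perm (Fin (N m)),
        (∑ ℓ ∈ Finset.univ.filter (fun ℓ : Fin (N j) =>
            (σ j ℓ : ℕ) / p j = (σ i k : ℕ) / p i ∧
            (⟨j, ℓ⟩ : Σ m : Fin n, Fin (N m)) ≠ ⟨i, k⟩),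
          K i j (x i k - x j ℓ))
        = ∑ ℓ ∈ Finset.univ.filter (fun ℓ : Fin (N j) =>
            (⟨j, ℓ⟩ : Σ m : Fin n, Fin (N m)) ≠ ⟨i, k⟩),
            (if (σ j ℓ : ℕ) / p j = (σ i k : ℕ) / p i then K i j (x i k - x j ℓ) else 0) := by
      intro σ
      rw [← Finset.sum_filter, Finset.filter_filter]
      exact Finset.sum_congr (Finset.filter_congr (fun ℓ _ => and_comm)) (fun _ _ => rfl)
    rw [Finset.sum_congr rfl (fun σ _ => e1 σ), Finset.sum_comm]
    have e2 : ∀ ℓ ∈ Finset.univ.filter (fun ℓ : Fin (N j) =>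
          (⟨j, ℓ⟩ : Σ m : Fin n, Fin (N m)) ≠ ⟨i, k⟩),
        (∑ σ : ∀ m : Fin n, Equiv.Perm (Fin (N m)),
          if (σ j ℓ : ℕ) / p j = (σ i k : ℕ) / p i then K i j (x i k - x j ℓ) else 0)
        = (∑ σ : ∀ m : Fin n, Equiv.Perm (Fin (N m)),
            if (σ j ℓ : ℕ) / p j = (σ i k : ℕ) / p i then (1 : ℝ) else 0) •
              K i j (x i k - x j ℓ) := by
      intro ℓ _
      rw [Finset.sum_smul]
      exact Finset.sum_congr rfl (fun σ _ => by split <;> simp)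
    rw [Finset.sum_congr rfl e2, Finset.smul_sum]
    have e3 : ∀ ℓ ∈ Finset.univ.filter (fun ℓ : Fin (N j) =>
          (⟨j, ℓ⟩ : Σ m : Fin n, Fin (N m)) ≠ ⟨i, k⟩),
        ((b i : ℝ) / (((p j : ℝ) - if i = j then 1 else 0) * (min (b i) (b j) : ℝ))) •
          ((∑ σ : ∀ m : Fin n, Equiv.Perm (Fin (N m)),
            if (σ j ℓ : ℕ) / p j = (σ i k : ℕ) / p i then (1 : ℝ) else 0) •
              K i j (x i k - x j ℓ))
        = (Fintype.card (∀ m : Fin n, Equiv.Perm (Fin (N m))) : ℝ) •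
            ((((N j : ℝ) - if i = j then 1 else 0))⁻¹ • K i j (x i k - x j ℓ)) := by
      intro ℓ hℓ
      have hne := (Finset.mem_filter.mp hℓ).2
      rw [smul_smul, smul_smul, key j ℓ hne, mul_comm]
    rw [Finset.sum_congr rfl e3, ← Finset.smul_sum, ← Finset.smul_sum]
  rw [hS, sub_self, smul_zero]
end

section
/- (Single-species case of Proposition 2.1.) In the batch model with one species (n = 1, b batches of size p, N = b·p, N ≥ 3), for every particle k, the variance of the random-batch remainder satisfies Var(χ^k(x)) = (1/(p−1) − 1/(N−1)) · A(x), where A(x) = (1/(N−2)) Σ_{ℓ≠k} |K(x^k−x^ℓ) − (1/(N−1)) Σ_{ℓ'≠k} K(x^k−x^{ℓ'})|². -/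
set_option maxHeartbeats 1000000
open Finset

lemma batch_card (b p N : ℕ) (hN : N = b * p) (hp : 0 < p) (u : Fin N) :
    (Finset.univ.filter (fun v : Fin N => (v : ℕ) / p = (u : ℕ) / p)).card = p := by
  set c := (u : ℕ) / p with hc
  have hcb : c < b := by
    rw [hc, Nat.div_lt_iff_lt_mul hp]; have := u.isLt; omega
  have hcp : (c + 1) * p ≤ b * p := Nat.mul_le_mul_right p hcb
  rw [Nat.succ_mul] at hcp
  apply Finset.card_eq_of_bijective (fun i hi => (⟨i + c * p, by omega⟩ : Fin N))
  · intro a ha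
    simp only [Finset.mem_filter, Finset.mem_univ, true_and] at ha
    refine ⟨(a : ℕ) % p, Nat.mod_lt _ hp, ?_⟩
    apply Fin.ext
    simp only []
    conv_rhs => rw [← Nat.mod_add_div (a : ℕ) p]
    rw [ha, Nat.mul_comm]
  · intro i hi
    simp only [Finset.mem_filter, Finset.mem_univ, true_and]
    rw [Nat.add_mul_div_right _ _ hp, Nat.div_eq_of_lt hi, Nat.zero_add]
  · intro i j hi hj hij
    have := Fin.val_eq_of_eq hij
    simp only [] at this
    omega

lemma card_filter_equiv {α β : Type*} [Fintype α] [Fintype β] [DecidableEq α] [DecidableEq β]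
    (e : α ≃ β) (P : β → Prop) [DecidablePred P] :
    (Finset.univ.filter (fun a => P (e a))).card = (Finset.univ.filter P).card := by
  rw [← Fintype.card_subtype, ← Fintype.card_subtype]
  exact Fintype.card_congr (e.subtypeEquiv fun a => Iff.rfl)

lemma key_variance
    {V : Type*} [NormedAddCommGroup V] [InnerProductSpace ℝ V]
    (b p : ℕ) (hb : 1 ≤ b) (hp : 2 ≤ p) (N : ℕ) (hN : N = b * p) (hN3 : 3 ≤ N)
    (F : Fin N → V) (k : Fin N) :
    (Fintype.card (Equiv.Perm (Fin N)) : ℝ)⁻¹ *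
      ∑ σ : Equiv.Perm (Fin N),
        ‖((p : ℝ) - 1)⁻¹ •
            (∑ ℓ ∈ Finset.univ.filter (fun ℓ : Fin N =>
                ℓ ≠ k ∧ (σ ℓ : ℕ) / p = (σ k : ℕ) / p), F ℓ)
          - ((N : ℝ) - 1)⁻¹ •
              (∑ ℓ ∈ Finset.univ.filter (fun ℓ : Fin N => ℓ ≠ k), F ℓ)‖ ^ 2
    = (1 / ((p : ℝ) - 1) - 1 / ((N : ℝ) - 1)) *
        (((N : ℝ) - 2)⁻¹ *
          ∑ ℓ ∈ Finset.univ.filter (fun ℓ : Fin N => ℓ ≠ k),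
            ‖F ℓ - ((N : ℝ) - 1)⁻¹ •
                  ∑ ℓ' ∈ Finset.univ.filter (fun ℓ' : Fin N => ℓ' ≠ k), F ℓ'‖ ^ 2) := by
  classical
  have hpN : p ≤ N := by rw [hN]; exact Nat.le_mul_of_pos_left p hb
  have hp1 : ((p : ℝ) - 1) ≠ 0 := by
    have : (2:ℝ) ≤ (p:ℝ) := by exact_mod_cast hp
    linarith
  have hN1 : ((N : ℝ) - 1) ≠ 0 := by
    have : (3:ℝ) ≤ (N:ℝ) := by exact_mod_cast hN3
    linarith
  have hN2 : ((N : ℝ) - 2) ≠ 0 := by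
    have : (3:ℝ) ≤ (N:ℝ) := by exact_mod_cast hN3
    linarith
  have hcastp : ((p - 1 : ℕ) : ℝ) = (p : ℝ) - 1 := by
    push_cast [Nat.cast_sub (by omega : 1 ≤ p)]; ring
  have hcastN : ((N - 1 : ℕ) : ℝ) = (N : ℝ) - 1 := by
    push_cast [Nat.cast_sub (by omega : 1 ≤ N)]; ring
  set M := Fintype.card (Equiv.Perm (Fin N)) with hM
  have hM0 : (M : ℝ) ≠ 0 := by positivity
  set T : Finset (Fin N) := Finset.univ.filter (fun ℓ : Fin N => ℓ ≠ k) with hT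
  have hTmem : ∀ ℓ, ℓ ∈ T ↔ ℓ ≠ k := by intro ℓ; simp [hT]
  have hTcard : T.card = N - 1 := by
    rw [hT, Finset.filter_ne', Finset.card_erase_of_mem (Finset.mem_univ k),
      Finset.card_univ, Fintype.card_fin]
  set m : V := ((N : ℝ) - 1)⁻¹ • ∑ ℓ ∈ T, F ℓ with hm
  have hw0 : ∑ ℓ ∈ T, (F ℓ - m) = 0 := by
    rw [Finset.sum_sub_distrib, Finset.sum_const, hTcard, hm,
      ← Nat.cast_smul_eq_nsmul ℝ, smul_smul, hcastN, mul_inv_cancel₀ hN1, one_smul, sub_self]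
  set cnd : Equiv.Perm (Fin N) → Fin N → Prop :=
    fun σ ℓ => (σ ℓ : ℕ) / p = (σ k : ℕ) / p with hcnd
  set S : Equiv.Perm (Fin N) → Finset (Fin N) := fun σ => T.filter (cnd σ) with hS
  have hST : ∀ σ : Equiv.Perm (Fin N),
      Finset.univ.filter (fun ℓ : Fin N => ℓ ≠ k ∧ (σ ℓ : ℕ) / p = (σ k : ℕ) / p) = S σ := by
    intro σ; simp only [hS, hT, Finset.filter_filter, hcnd]
  have hScard : ∀ σ, (S σ).card = p - 1 := by
    intro σ
    have hSe : S σ = (Finset.univ.filter (fun ℓ : Fin N => cnd σ ℓ)).erase k := by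
      ext ℓ
      simp only [hS, hT, Finset.mem_filter, Finset.mem_erase, Finset.mem_univ, true_and,
        Finset.filter_filter]
      try tauto
    rw [hSe, Finset.card_erase_of_mem (by simp [hcnd])]
    have hre : (Finset.univ.filter (fun ℓ : Fin N => cnd σ ℓ)).card
        = (Finset.univ.filter (fun v : Fin N => (v : ℕ) / p = ((σ k : Fin N) : ℕ) / p)).card := by
      exact card_filter_equiv σ (fun v : Fin N => (v : ℕ) / p = ((σ k : Fin N) : ℕ) / p)
    rw [hre, batch_card b p N hN (by omega) (σ k)]
  have hchi : ∀ σ : Equiv.Perm (Fin N),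
      ((p : ℝ) - 1)⁻¹ • (∑ ℓ ∈ S σ, F ℓ) - m
        = ((p : ℝ) - 1)⁻¹ • ∑ ℓ ∈ S σ, (F ℓ - m) := by
    intro σ
    rw [Finset.sum_sub_distrib, Finset.sum_const, hScard σ, smul_sub,
      ← Nat.cast_smul_eq_nsmul ℝ, smul_smul, hcastp, inv_mul_cancel₀ hp1, one_smul]
  set g : Fin N → Fin N → ℝ := fun a c => (inner ℝ (F a - m) (F c - m) : ℝ) with hg
  have hnorm : ∀ σ : Equiv.Perm (Fin N),
      ‖((p : ℝ) - 1)⁻¹ • (∑ ℓ ∈ S σ, F ℓ) - m‖ ^ 2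
        = (((p : ℝ) - 1)⁻¹) ^ 2 * ∑ ℓ ∈ S σ, ∑ ℓ' ∈ S σ, g ℓ ℓ' := by
    intro σ
    rw [hchi σ, norm_smul, mul_pow, Real.norm_eq_abs, sq_abs,
      ← real_inner_self_eq_norm_sq, sum_inner]
    refine congrArg _ (Finset.sum_congr rfl fun ℓ _ => ?_)
    rw [inner_sum]
  set C : Fin N → Fin N → ℕ := fun a c =>
    (Finset.univ.filter (fun σ : Equiv.Perm (Fin N) => cnd σ a ∧ cnd σ c)).card with hC
  have hswap : ∑ σ : Equiv.Perm (Fin N), ∑ ℓ ∈ S σ, ∑ ℓ' ∈ S σ, g ℓ ℓ'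
      = ∑ ℓ ∈ T, ∑ ℓ' ∈ T, (C ℓ ℓ' : ℝ) * g ℓ ℓ' := by
    calc ∑ σ : Equiv.Perm (Fin N), ∑ ℓ ∈ S σ, ∑ ℓ' ∈ S σ, g ℓ ℓ'
        = ∑ σ : Equiv.Perm (Fin N), ∑ ℓ ∈ T, ∑ ℓ' ∈ T,
            (if cnd σ ℓ ∧ cnd σ ℓ' then g ℓ ℓ' else 0) := by
          refine Finset.sum_congr rfl fun σ _ => ?_
          have hite : ∀ ℓ ℓ' : Fin N, (if cnd σ ℓ ∧ cnd σ ℓ' then g ℓ ℓ' else 0)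
              = (if cnd σ ℓ then (if cnd σ ℓ' then g ℓ ℓ' else 0) else 0) := by
            intro ℓ ℓ'; split_ifs <;> first | rfl | tauto
          simp only [hite]
          simp only [hS]
          rw [Finset.sum_filter]
          refine Finset.sum_congr rfl fun ℓ _ => ?_
          split_ifs with h
          · rw [Finset.sum_filter]
          · exact Finset.sum_const_zero.symm
      _ = ∑ ℓ ∈ T, ∑ ℓ' ∈ T, ∑ σ : Equiv.Perm (Fin N),
            (if cnd σ ℓ ∧ cnd σ ℓ' then g ℓ ℓ' else 0) := by
          rw [Finset.sum_comm]
          exact Finset.sum_congr rfl fun ℓ _ => Finset.sum_comm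
      _ = ∑ ℓ ∈ T, ∑ ℓ' ∈ T, (C ℓ ℓ' : ℝ) * g ℓ ℓ' := by
          refine Finset.sum_congr rfl fun ℓ _ => Finset.sum_congr rfl fun ℓ' _ => ?_
          rw [← Finset.sum_filter, Finset.sum_const, nsmul_eq_mul, hC]
  have hCt : ∀ (τ : Equiv.Perm (Fin N)), τ k = k → ∀ a c : Fin N, C (τ a) (τ c) = C a c := by
    intro τ hτ a c
    simp only [hC]
    rw [← card_filter_equiv (Equiv.mulRight τ) (fun σ : Equiv.Perm (Fin N) => cnd σ a ∧ cnd σ c)]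
    congr 1
    apply Finset.filter_congr
    intro σ _
    simp only [Equiv.coe_mulRight, hcnd, Equiv.Perm.mul_apply, hτ]
  have hCsym : ∀ a c : Fin N, C a c = C c a := by
    intro a c
    simp only [hC]
    congr 1
    ext σ
    simp only [Finset.mem_filter]
    tauto
  obtain ⟨ℓ₀, h0, ℓ₁, h1, hne01⟩ := Finset.one_lt_card.mp (by rw [hTcard]; omega : 1 < T.card)
  have hstep : ∀ a c c' : Fin N, a ∈ T → c ∈ T → c' ∈ T → c ≠ a → c' ≠ a → C a c = C a c' := by
    intro a c c' ha hc hc' hca hc'a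
    have hfix : Equiv.swap c c' k = k :=
      Equiv.swap_apply_of_ne_of_ne (Ne.symm ((hTmem c).mp hc)) (Ne.symm ((hTmem c').mp hc'))
    have h1 := hCt (Equiv.swap c c') hfix a c'
    rw [Equiv.swap_apply_of_ne_of_ne hca.symm hc'a.symm, Equiv.swap_apply_right] at h1
    exact h1
  have hC1const : ∀ ℓ ∈ T, C ℓ ℓ = C ℓ₀ ℓ₀ := by
    intro ℓ hℓ
    rcases eq_or_ne ℓ ℓ₀ with rfl | hne
    · rfl
    · have hfix : Equiv.swap ℓ ℓ₀ k = k :=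
        Equiv.swap_apply_of_ne_of_ne (Ne.symm ((hTmem ℓ).mp hℓ)) (Ne.symm ((hTmem ℓ₀).mp h0))
      have h2 := hCt (Equiv.swap ℓ ℓ₀) hfix ℓ₀ ℓ₀
      rw [Equiv.swap_apply_right] at h2
      exact h2
  have hC2const : ∀ ℓ ∈ T, ∀ ℓ' ∈ T, ℓ ≠ ℓ' → C ℓ ℓ' = C ℓ₀ ℓ₁ := by
    intro ℓ hℓ ℓ' hℓ' hne
    rcases eq_or_ne ℓ' ℓ₀ with rfl | h
    · rw [hCsym]
      exact hstep ℓ' ℓ ℓ₁ h0 hℓ h1 hne hne01.symm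
    · have s1 : C ℓ ℓ' = C ℓ' ℓ := hCsym ℓ ℓ'
      have s2 : C ℓ' ℓ = C ℓ' ℓ₀ := hstep ℓ' ℓ ℓ₀ hℓ' hℓ h0 hne (Ne.symm h)
      have s3 : C ℓ' ℓ₀ = C ℓ₀ ℓ' := hCsym ℓ' ℓ₀
      have s4 : C ℓ₀ ℓ' = C ℓ₀ ℓ₁ := hstep ℓ₀ ℓ' ℓ₁ h0 hℓ' h1 h hne01.symm
      rw [s1, s2, s3, s4]
  have hsum1 : ∑ ℓ ∈ T, C ℓ ℓ = M * (p - 1) := by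
    calc ∑ ℓ ∈ T, C ℓ ℓ
        = ∑ ℓ ∈ T, ∑ σ : Equiv.Perm (Fin N), (if cnd σ ℓ ∧ cnd σ ℓ then 1 else 0) := by
          refine Finset.sum_congr rfl fun ℓ _ => ?_
          simp only [hC]
          rw [Finset.card_filter]
      _ = ∑ σ : Equiv.Perm (Fin N), ∑ ℓ ∈ T, (if cnd σ ℓ ∧ cnd σ ℓ then 1 else 0) :=
          Finset.sum_comm
      _ = ∑ σ : Equiv.Perm (Fin N), (p - 1) := by
          refine Finset.sum_congr rfl fun σ _ => ?_
          have : ∀ ℓ : Fin N, (if cnd σ ℓ ∧ cnd σ ℓ then (1:ℕ) else 0)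
              = (if cnd σ ℓ then 1 else 0) := by
            intro ℓ; split_ifs <;> first | rfl | tauto
          simp only [this]
          rw [← Finset.card_filter]
          exact hScard σ
      _ = M * (p - 1) := by rw [Finset.sum_const, Finset.card_univ, smul_eq_mul]
  have hsum2 : ∑ ℓ ∈ T, ∑ ℓ' ∈ T.erase ℓ, C ℓ ℓ' = M * ((p - 1) * (p - 2)) := by
    calc ∑ ℓ ∈ T, ∑ ℓ' ∈ T.erase ℓ, C ℓ ℓ'
        = ∑ ℓ ∈ T, ∑ ℓ' ∈ T.erase ℓ, ∑ σ : Equiv.Perm (Fin N),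
            (if cnd σ ℓ ∧ cnd σ ℓ' then 1 else 0) := by
          refine Finset.sum_congr rfl fun ℓ _ => Finset.sum_congr rfl fun ℓ' _ => ?_
          simp only [hC]
          rw [Finset.card_filter]
      _ = ∑ σ : Equiv.Perm (Fin N), ∑ ℓ ∈ T, ∑ ℓ' ∈ T.erase ℓ,
            (if cnd σ ℓ ∧ cnd σ ℓ' then 1 else 0) := by
          rw [Finset.sum_comm]
          exact Finset.sum_congr rfl fun ℓ _ => Finset.sum_comm
      _ = ∑ σ : Equiv.Perm (Fin N), ((p - 1) * (p - 2)) := by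
          refine Finset.sum_congr rfl fun σ _ => ?_
          have hite : ∀ ℓ ℓ' : Fin N, (if cnd σ ℓ ∧ cnd σ ℓ' then (1:ℕ) else 0)
              = (if cnd σ ℓ then (if cnd σ ℓ' then 1 else 0) else 0) := by
            intro ℓ ℓ'; split_ifs <;> first | rfl | tauto
          simp only [hite]
          calc ∑ ℓ ∈ T, ∑ ℓ' ∈ T.erase ℓ,
                (if cnd σ ℓ then (if cnd σ ℓ' then (1:ℕ) else 0) else 0)
              = ∑ ℓ ∈ T, (if cnd σ ℓ then ((T.erase ℓ).filter (cnd σ)).card else 0) := by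
                refine Finset.sum_congr rfl fun ℓ _ => ?_
                split_ifs with h
                · rw [Finset.card_filter]
                · exact Finset.sum_const_zero
            _ = ∑ ℓ ∈ S σ, ((T.erase ℓ).filter (cnd σ)).card := by
                rw [← Finset.sum_filter]
            _ = ∑ ℓ ∈ S σ, (p - 2) := by
                refine Finset.sum_congr rfl fun ℓ hℓ => ?_
                have he : (T.erase ℓ).filter (cnd σ) = (S σ).erase ℓ := by
                  ext a
                  simp only [hS, Finset.mem_erase, Finset.mem_filter]
                  tauto
                rw [he, Finset.card_erase_of_mem hℓ, hScard σ]
                omega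
            _ = (p - 1) * (p - 2) := by
                rw [Finset.sum_const, hScard σ, smul_eq_mul]
      _ = M * ((p - 1) * (p - 2)) := by rw [Finset.sum_const, Finset.card_univ, smul_eq_mul]
  have hgdiag : ∀ ℓ : Fin N, g ℓ ℓ = ‖F ℓ - m‖ ^ 2 := fun ℓ => real_inner_self_eq_norm_sq _
  have hgsum : ∑ ℓ ∈ T, ∑ ℓ' ∈ T, g ℓ ℓ' = 0 := by
    have hin : (inner ℝ (∑ ℓ ∈ T, (F ℓ - m)) (∑ ℓ' ∈ T, (F ℓ' - m)) : ℝ)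
        = ∑ ℓ ∈ T, ∑ ℓ' ∈ T, g ℓ ℓ' := by
      rw [sum_inner]
      exact Finset.sum_congr rfl fun ℓ _ => inner_sum _ _ _
    rw [← hin, hw0, inner_zero_left]
  have hoff : ∑ ℓ ∈ T, ∑ ℓ' ∈ T.erase ℓ, g ℓ ℓ' = -(∑ ℓ ∈ T, ‖F ℓ - m‖ ^ 2) := by
    have hsplit : ∀ ℓ ∈ T, ∑ ℓ' ∈ T, g ℓ ℓ' = g ℓ ℓ + ∑ ℓ' ∈ T.erase ℓ, g ℓ ℓ' :=
      fun ℓ hℓ => (Finset.add_sum_erase T _ hℓ).symm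
    have h := hgsum
    rw [Finset.sum_congr rfl hsplit, Finset.sum_add_distrib] at h
    have hd : ∑ ℓ ∈ T, g ℓ ℓ = ∑ ℓ ∈ T, ‖F ℓ - m‖ ^ 2 :=
      Finset.sum_congr rfl fun ℓ _ => hgdiag ℓ
    rw [hd] at h
    linarith
  have hcastp2 : ((p - 2 : ℕ) : ℝ) = (p : ℝ) - 2 := by
    push_cast [Nat.cast_sub hp]; ring
  have hcastN2 : ((N - 2 : ℕ) : ℝ) = (N : ℝ) - 2 := by
    push_cast [Nat.cast_sub (by omega : 2 ≤ N)]; ring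
  have e1 : ((C ℓ₀ ℓ₀ : ℕ) : ℝ) = M * ((p:ℝ) - 1) / ((N:ℝ) - 1) := by
    have hconst : ∑ ℓ ∈ T, C ℓ ℓ = (N - 1) * C ℓ₀ ℓ₀ := by
      rw [Finset.sum_congr rfl hC1const, Finset.sum_const, hTcard, smul_eq_mul]
    have hNat : (N - 1) * C ℓ₀ ℓ₀ = M * (p - 1) := hconst ▸ hsum1
    have hr := congrArg (Nat.cast (R := ℝ)) hNat
    push_cast [hcastp, hcastN] at hr
    field_simp
    linear_combination hr
  have e2 : ((C ℓ₀ ℓ₁ : ℕ) : ℝ)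
      = M * (((p:ℝ) - 1) * ((p:ℝ) - 2)) / (((N:ℝ) - 1) * ((N:ℝ) - 2)) := by
    have hconst : ∑ ℓ ∈ T, ∑ ℓ' ∈ T.erase ℓ, C ℓ ℓ' = ((N - 1) * (N - 2)) * C ℓ₀ ℓ₁ := by
      have : ∀ ℓ ∈ T, ∑ ℓ' ∈ T.erase ℓ, C ℓ ℓ' = (N - 2) * C ℓ₀ ℓ₁ := by
        intro ℓ hℓ
        have : ∀ ℓ' ∈ T.erase ℓ, C ℓ ℓ' = C ℓ₀ ℓ₁ := by
          intro ℓ' hℓ'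
          obtain ⟨hne', hmem'⟩ := Finset.mem_erase.mp hℓ'
          exact hC2const ℓ hℓ ℓ' hmem' (Ne.symm hne')
        rw [Finset.sum_congr rfl this, Finset.sum_const,
          Finset.card_erase_of_mem hℓ, hTcard, smul_eq_mul]
        have h21 : N - 1 - 1 = N - 2 := by omega
        rw [h21]
      rw [Finset.sum_congr rfl this, Finset.sum_const, hTcard, smul_eq_mul, Nat.mul_assoc]
    have hNat : ((N - 1) * (N - 2)) * C ℓ₀ ℓ₁ = M * ((p - 1) * (p - 2)) := hconst ▸ hsum2
    have hr := congrArg (Nat.cast (R := ℝ)) hNat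
    push_cast [hcastp, hcastN, hcastp2, hcastN2] at hr
    have hne : ((N:ℝ) - 1) * ((N:ℝ) - 2) ≠ 0 := mul_ne_zero hN1 hN2
    field_simp
    linear_combination hr
  -- final assembly
  have hsσ : ∀ σ : Equiv.Perm (Fin N),
      ‖((p : ℝ) - 1)⁻¹ •
          (∑ ℓ ∈ Finset.univ.filter (fun ℓ : Fin N =>
              ℓ ≠ k ∧ (σ ℓ : ℕ) / p = (σ k : ℕ) / p), F ℓ) - m‖ ^ 2
        = (((p : ℝ) - 1)⁻¹) ^ 2 * ∑ ℓ ∈ S σ, ∑ ℓ' ∈ S σ, g ℓ ℓ' := by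
    intro σ
    rw [hST σ]
    exact hnorm σ
  have hbig : ∑ ℓ ∈ T, ∑ ℓ' ∈ T, (C ℓ ℓ' : ℝ) * g ℓ ℓ'
      = (C ℓ₀ ℓ₀ : ℝ) * (∑ ℓ ∈ T, ‖F ℓ - m‖ ^ 2)
        + (C ℓ₀ ℓ₁ : ℝ) * (-(∑ ℓ ∈ T, ‖F ℓ - m‖ ^ 2)) := by
    calc ∑ ℓ ∈ T, ∑ ℓ' ∈ T, (C ℓ ℓ' : ℝ) * g ℓ ℓ'
        = ∑ ℓ ∈ T, ((C ℓ ℓ : ℝ) * g ℓ ℓ + ∑ ℓ' ∈ T.erase ℓ, (C ℓ ℓ' : ℝ) * g ℓ ℓ') :=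
          Finset.sum_congr rfl fun ℓ hℓ => (Finset.add_sum_erase T _ hℓ).symm
      _ = ∑ ℓ ∈ T, (C ℓ₀ ℓ₀ : ℝ) * g ℓ ℓ
          + ∑ ℓ ∈ T, ∑ ℓ' ∈ T.erase ℓ, (C ℓ₀ ℓ₁ : ℝ) * g ℓ ℓ' := by
          rw [Finset.sum_add_distrib]
          congr 1
          · refine Finset.sum_congr rfl fun ℓ hℓ => ?_
            rw [hC1const ℓ hℓ]
          · refine Finset.sum_congr rfl fun ℓ hℓ => Finset.sum_congr rfl fun ℓ' hℓ' => ?_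
            obtain ⟨hne', hmem'⟩ := Finset.mem_erase.mp hℓ'
            rw [hC2const ℓ hℓ ℓ' hmem' (Ne.symm hne')]
      _ = (C ℓ₀ ℓ₀ : ℝ) * (∑ ℓ ∈ T, ‖F ℓ - m‖ ^ 2)
          + (C ℓ₀ ℓ₁ : ℝ) * (-(∑ ℓ ∈ T, ‖F ℓ - m‖ ^ 2)) := by
          congr 1
          · rw [← Finset.mul_sum]
            congr 1
            exact Finset.sum_congr rfl fun ℓ _ => hgdiag ℓ
          · rw [← hoff, Finset.mul_sum]
            exact Finset.sum_congr rfl fun ℓ _ => (Finset.mul_sum _ _ _).symm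
  rw [Finset.sum_congr rfl (fun σ _ => hsσ σ), ← Finset.mul_sum, hswap, hbig, e1, e2]
  field_simp
  ring


/-- **Single-species case of Proposition 2.1.** In the batch model
with one species (`b` batches of size `p`, `N = b * p ≥ 3`), for every particle
`k`, the variance of the random-batch remainder
`χ^k(σ) = (1/(p-1)) Σ_{ℓ ≠ k, same batch} K(x k - x ℓ) - (1/(N-1)) Σ_{ℓ ≠ k} K(x k - x ℓ)`
equals `(1/(p-1) - 1/(N-1)) · A(x)` with
`A(x) = (1/(N-2)) Σ_{ℓ ≠ k} |K(x k - x ℓ) - (1/(N-1)) Σ_{ℓ' ≠ k} K(x k - x ℓ')|²`. -/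
theorem single_species_variance
    (b p : ℕ) (hb : 1 ≤ b) (hp : 2 ≤ p) (N : ℕ) (hN : N = b * p) (hN3 : 3 ≤ N)
    (d : ℕ) (x : Fin N → EuclideanSpace ℝ (Fin d))
    (K : EuclideanSpace ℝ (Fin d) → EuclideanSpace ℝ (Fin d)) (k : Fin N) :
    (Fintype.card (Equiv.Perm (Fin N)) : ℝ)⁻¹ *
      ∑ σ : Equiv.Perm (Fin N),
        ‖((p : ℝ) - 1)⁻¹ •
            (∑ ℓ ∈ Finset.univ.filter (fun ℓ : Fin N =>
                ℓ ≠ k ∧ (σ ℓ : ℕ) / p = (σ k : ℕ) / p), K (x k - x ℓ))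
          - ((N : ℝ) - 1)⁻¹ •
              (∑ ℓ ∈ Finset.univ.filter (fun ℓ : Fin N => ℓ ≠ k), K (x k - x ℓ))‖ ^ 2
    = (1 / ((p : ℝ) - 1) - 1 / ((N : ℝ) - 1)) *
        (((N : ℝ) - 2)⁻¹ *
          ∑ ℓ ∈ Finset.univ.filter (fun ℓ : Fin N => ℓ ≠ k),
            ‖K (x k - x ℓ)
              - ((N : ℝ) - 1)⁻¹ •
                  ∑ ℓ' ∈ Finset.univ.filter (fun ℓ' : Fin N => ℓ' ≠ k),
                    K (x k - x ℓ')‖ ^ 2) := by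
  exact key_variance b p hb hp N hN hN3 (fun ℓ => K (x k - x ℓ)) k
end

section
/- (Lemma 2.2, cross-species case.) In the two-species batch model (species i and j, i ≠ j), let S^1, …, S^{N_j} : Ω → ℝ^d be square-integrable random variables such that the σ-algebra generated by (S^1, …, S^{N_j}) is independent of the σ-algebra generated by the batch permutations (σ_i, σ_j). Then for every particle k of species i, the L²(Ω) norm of (1/p_j) Σ_{ℓ: a_j(ℓ) = a_i(k)} S^ℓ is at most max_{ℓ=1,…,N_j} ‖S^ℓ‖_{L²(Ω)}. -/
open MeasureTheory ProbabilityTheory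
open scoped ENNReal

/-- Equip the (finite) permutation group with the discrete σ-algebra. -/
instance permMeasurableSpace (α : Type*) : MeasurableSpace (Equiv.Perm α) := ⊤

private lemma lintegral_sq_le_of_eLpNorm_le {α : Type*} [MeasurableSpace α] {μ : Measure α}
    {E : Type*} [NormedAddCommGroup E] {g : α → E} {M : ℝ≥0∞}
    (h : eLpNorm g 2 μ ≤ M) : ∫⁻ a, (‖g a‖₊ : ℝ≥0∞) ^ 2 ∂μ ≤ M ^ 2 := by
  have h2 : eLpNorm g 2 μ = (∫⁻ a, (‖g a‖₊ : ℝ≥0∞) ^ (2 : ℝ) ∂μ) ^ (1 / (2 : ℝ)) := by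
    rw [eLpNorm_eq_lintegral_rpow_enorm_toReal (by norm_num) (by norm_num)]
    simp only [enorm_eq_nnnorm]
    norm_num
  have h3 := ENNReal.rpow_le_rpow (z := 2) (h2 ▸ h) (by norm_num)
  rw [← ENNReal.rpow_mul] at h3
  norm_num at h3
  exact h3

private lemma eLpNorm_le_of_lintegral_sq_le {α : Type*} [MeasurableSpace α] {μ : Measure α}
    {E : Type*} [NormedAddCommGroup E] {g : α → E} {M : ℝ≥0∞}
    (h : ∫⁻ a, (‖g a‖₊ : ℝ≥0∞) ^ 2 ∂μ ≤ M ^ 2) : eLpNorm g 2 μ ≤ M := by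
  have h2 : eLpNorm g 2 μ = (∫⁻ a, (‖g a‖₊ : ℝ≥0∞) ^ (2 : ℝ) ∂μ) ^ (1 / (2 : ℝ)) := by
    rw [eLpNorm_eq_lintegral_rpow_enorm_toReal (by norm_num) (by norm_num)]
    simp only [enorm_eq_nnnorm]
    norm_num
  have h4 : ∫⁻ a, (‖g a‖₊ : ℝ≥0∞) ^ (2:ℝ) ∂μ ≤ M ^ (2:ℝ) := by
    calc ∫⁻ a, (‖g a‖₊ : ℝ≥0∞) ^ (2:ℝ) ∂μ
        = ∫⁻ a, (‖g a‖₊ : ℝ≥0∞) ^ 2 ∂μ := by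
          apply lintegral_congr; intro a
          rw [show ((2:ℝ)) = ((2:ℕ):ℝ) by norm_num, ENNReal.rpow_natCast]
      _ ≤ M ^ 2 := h
      _ = M ^ (2:ℝ) := by rw [show ((2:ℝ)) = ((2:ℕ):ℝ) by norm_num, ENNReal.rpow_natCast]
  have h5 := ENNReal.rpow_le_rpow (z := 1/2) h4 (by norm_num)
  rw [← ENNReal.rpow_mul] at h5
  norm_num at h5 h2
  rw [h2]
  exact h5

/-- **Lemma 2.2, cross-species case.** In the two-species batch
model (species `i ≠ j`, batch permutations `σᵢ, σⱼ` jointly uniformly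
distributed, i.e. independent and each uniform), if `S^1, …, S^{N_j}` are
square-integrable `ℝ^d`-valued random variables whose joint σ-algebra is
independent of the one generated by `(σᵢ, σⱼ)`, then for every particle `k` of
species `i` the `L²(Ω)` norm of `(1/p_j) Σ_{ℓ : a_j(ℓ) = a_i(k)} S^ℓ` is at most
`max_ℓ ‖S^ℓ‖_{L²(Ω)}`. -/
theorem batch_average_L2_bound_cross_species
    {Ω : Type*} [MeasurableSpace Ω] (μ : Measure Ω) [IsProbabilityMeasure μ]
    (bi pi Ni bj pj Nj : ℕ) (hbi : 1 ≤ bi) (hpi : 2 ≤ pi) (hNi : Ni = bi * pi)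
    (hbj : 1 ≤ bj) (hpj : 2 ≤ pj) (hNj : Nj = bj * pj) (d : ℕ)
    (σi : Ω → Equiv.Perm (Fin Ni)) (σj : Ω → Equiv.Perm (Fin Nj))
    (hσimeas : Measurable σi) (hσjmeas : Measurable σj)
    (hσunif : ∀ (e : Equiv.Perm (Fin Ni)) (f : Equiv.Perm (Fin Nj)),
      μ {ω | σi ω = e ∧ σj ω = f} =
        ((Fintype.card (Equiv.Perm (Fin Ni)) : ℝ≥0∞) *
          (Fintype.card (Equiv.Perm (Fin Nj)) : ℝ≥0∞))⁻¹)
    (S : Fin Nj → Ω → EuclideanSpace ℝ (Fin d))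
    (hS : ∀ ℓ, MemLp (S ℓ) 2 μ)
    (hindep : IndepFun (fun ω (ℓ : Fin Nj) => S ℓ ω) (fun ω => (σi ω, σj ω)) μ)
    (k : Fin Ni) :
    eLpNorm (fun ω =>
        ((pj : ℝ))⁻¹ •
          ∑ ℓ ∈ Finset.univ.filter (fun ℓ : Fin Nj =>
              (σj ω ℓ : ℕ) / pj = (σi ω k : ℕ) / pi),
            S ℓ ω) 2 μ
    ≤ ⨆ ℓ : Fin Nj, eLpNorm (S ℓ) 2 μ := by
  classical
  have hpj0 : pj ≠ 0 := by omega
  set M := ⨆ ℓ : Fin Nj, eLpNorm (S ℓ) 2 μ with hM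
  set A : Equiv.Perm (Fin Ni) → Equiv.Perm (Fin Nj) → Finset (Fin Nj) :=
    fun e f => Finset.univ.filter (fun ℓ : Fin Nj => (f ℓ : ℕ) / pj = (e k : ℕ) / pi) with hA
  set G : Equiv.Perm (Fin Ni) → Equiv.Perm (Fin Nj) → Ω → EuclideanSpace ℝ (Fin d) :=
    fun e f ω => ((pj : ℝ))⁻¹ • ∑ ℓ ∈ A e f, S ℓ ω with hG
  -- cardinality bound
  have hcard : ∀ e f, (A e f).card ≤ pj := by
    intro e f
    calc (A e f).card
        ≤ (Finset.Ico (((e k : ℕ) / pi) * pj) (((e k : ℕ) / pi) * pj + pj)).card := by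
          apply Finset.card_le_card_of_injOn (fun ℓ => (f ℓ : ℕ))
          · intro ℓ hℓ
            simp only [hA, Finset.coe_filter, Set.mem_setOf_eq, Finset.mem_filter, Finset.mem_univ, true_and] at hℓ
            have h2 : (f ℓ : ℕ) % pj < pj := Nat.mod_lt _ (by omega)
            simp only [Finset.mem_coe, Finset.mem_Ico]
            rw [← hℓ]
            refine ⟨Nat.div_mul_le_self _ _, ?_⟩
            calc (f ℓ : ℕ) = pj * ((f ℓ : ℕ) / pj) + (f ℓ : ℕ) % pj :=
                  (Nat.div_add_mod _ _).symm
              _ < pj * ((f ℓ : ℕ) / pj) + pj := Nat.add_lt_add_left h2 _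
              _ = ((f ℓ : ℕ) / pj) * pj + pj := by ring
          · intro a _ b _ hab
            exact f.injective (Fin.val_injective hab)
      _ = pj := by simp
  have hle : ∀ ℓ, eLpNorm (S ℓ) 2 μ ≤ M := fun ℓ => le_iSup (fun ℓ => eLpNorm (S ℓ) 2 μ) ℓ
  -- L² bound for each fixed pair of permutations
  have hGbound : ∀ e f, eLpNorm (G e f) 2 μ ≤ M := by
    intro e f
    have h1 : eLpNorm (G e f) 2 μ
        ≤ (‖((pj : ℝ))⁻¹‖₊ : ℝ≥0∞) * eLpNorm (fun ω => ∑ ℓ ∈ A e f, S ℓ ω) 2 μ := by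
      have := eLpNorm_const_smul_le (c := ((pj : ℝ))⁻¹)
        (f := fun ω => ∑ ℓ ∈ A e f, S ℓ ω) (p := 2) (μ := μ)
      exact this
    have h2 : eLpNorm (fun ω => ∑ ℓ ∈ A e f, S ℓ ω) 2 μ
        ≤ ∑ ℓ ∈ A e f, eLpNorm (S ℓ) 2 μ := by
      have h := eLpNorm_sum_le (μ := μ) (p := 2) (s := A e f) (f := S)
        (fun ℓ _ => (hS ℓ).1) one_le_two
      have hfun : (fun ω => ∑ ℓ ∈ A e f, S ℓ ω) = ∑ ℓ ∈ A e f, S ℓ := by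
        ext ω; simp
      rw [hfun]
      exact h
    have h3 : ∑ ℓ ∈ A e f, eLpNorm (S ℓ) 2 μ ≤ (pj : ℝ≥0∞) * M := by
      calc ∑ ℓ ∈ A e f, eLpNorm (S ℓ) 2 μ ≤ ∑ _ℓ ∈ A e f, M :=
            Finset.sum_le_sum fun ℓ _ => hle ℓ
        _ = ((A e f).card : ℝ≥0∞) * M := by rw [Finset.sum_const, nsmul_eq_mul]
        _ ≤ (pj : ℝ≥0∞) * M := by
            gcongr
            exact_mod_cast hcard e f
    have hnn : (‖((pj : ℝ))⁻¹‖₊ : ℝ≥0∞) = ((pj : ℝ≥0∞))⁻¹ := by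
      rw [nnnorm_inv]
      rw [ENNReal.coe_inv (by simpa using hpj0)]
      congr 1
      simp
    calc eLpNorm (G e f) 2 μ
        ≤ (‖((pj : ℝ))⁻¹‖₊ : ℝ≥0∞) * eLpNorm (fun ω => ∑ ℓ ∈ A e f, S ℓ ω) 2 μ := h1
      _ ≤ ((pj : ℝ≥0∞))⁻¹ * ((pj : ℝ≥0∞) * M) := by
          rw [hnn]; exact mul_le_mul_right (h2.trans h3) _
      _ = M := by
          rw [← mul_assoc, ENNReal.inv_mul_cancel (by simpa using hpj0) (by simp), one_mul]
  -- measurability facts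
  have hGae : ∀ e f, AEMeasurable (fun ω => (‖G e f ω‖₊ : ℝ≥0∞) ^ 2) μ := by
    intro e f
    have : AEMeasurable (G e f) μ := by
      exact AEMeasurable.const_smul
        (Finset.aemeasurable_fun_sum (A e f) (fun ℓ _ => ((hS ℓ).1).aemeasurable)) ((pj : ℝ))⁻¹
    exact (this.aestronglyMeasurable.enorm).pow_const 2
  have hBmeas : ∀ (q : Equiv.Perm (Fin Ni) × Equiv.Perm (Fin Nj)),
      MeasurableSet {ω | (σi ω, σj ω) = q} := by
    intro q
    have : {ω | (σi ω, σj ω) = q} = σi ⁻¹' {q.1} ∩ σj ⁻¹' {q.2} := by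
      ext ω; simp [Prod.ext_iff]
    rw [this]
    exact (hσimeas MeasurableSpace.measurableSet_top).inter
      (hσjmeas MeasurableSpace.measurableSet_top)
  have hBμ : ∀ (q : Equiv.Perm (Fin Ni) × Equiv.Perm (Fin Nj)),
      μ {ω | (σi ω, σj ω) = q} =
        ((Fintype.card (Equiv.Perm (Fin Ni)) : ℝ≥0∞) *
          (Fintype.card (Equiv.Perm (Fin Nj)) : ℝ≥0∞))⁻¹ := by
    intro q
    have : {ω | (σi ω, σj ω) = q} = {ω | σi ω = q.1 ∧ σj ω = q.2} := by
      ext ω; simp [Prod.ext_iff]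
    rw [this]; exact hσunif q.1 q.2
  -- independence, composed
  have hindepEF : ∀ (q : Equiv.Perm (Fin Ni) × Equiv.Perm (Fin Nj)),
      IndepFun (fun ω => if (σi ω, σj ω) = q then (1 : ℝ≥0∞) else 0)
        (fun ω => (‖G q.1 q.2 ω‖₊ : ℝ≥0∞) ^ 2) μ := by
    intro q
    have hφ : Measurable (fun v : Fin Nj → EuclideanSpace ℝ (Fin d) =>
        (‖((pj : ℝ))⁻¹ • ∑ ℓ ∈ A q.1 q.2, v ℓ‖₊ : ℝ≥0∞) ^ 2) := by
      fun_prop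
    have hψ : Measurable (fun r : Equiv.Perm (Fin Ni) × Equiv.Perm (Fin Nj) =>
        if r = q then (1 : ℝ≥0∞) else 0) := by
      apply Measurable.ite _ measurable_const measurable_const
      have : {r : Equiv.Perm (Fin Ni) × Equiv.Perm (Fin Nj) | r = q} = {q.1} ×ˢ {q.2} := by
        ext r; simp [Prod.ext_iff]
      rw [this]
      exact MeasurableSet.prod MeasurableSpace.measurableSet_top MeasurableSpace.measurableSet_top
    exact (hindep.comp hφ hψ).symm
  -- pointwise decomposition
  have hpoint : ∀ ω,
      (‖G (σi ω) (σj ω) ω‖₊ : ℝ≥0∞) ^ 2 =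
      ∑ q : Equiv.Perm (Fin Ni) × Equiv.Perm (Fin Nj),
        (if (σi ω, σj ω) = q then (1 : ℝ≥0∞) else 0) * (‖G q.1 q.2 ω‖₊ : ℝ≥0∞) ^ 2 := by
    intro ω
    rw [Finset.sum_eq_single (σi ω, σj ω)]
    · simp
    · intro q _ hq
      rw [if_neg (fun h => hq h.symm), zero_mul]
    · intro h; exact absurd (Finset.mem_univ _) h
  -- main integral bound
  have hmain : ∫⁻ ω, (‖G (σi ω) (σj ω) ω‖₊ : ℝ≥0∞) ^ 2 ∂μ ≤ M ^ 2 := by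
    calc ∫⁻ ω, (‖G (σi ω) (σj ω) ω‖₊ : ℝ≥0∞) ^ 2 ∂μ
        = ∫⁻ ω, ∑ q : Equiv.Perm (Fin Ni) × Equiv.Perm (Fin Nj),
            (if (σi ω, σj ω) = q then (1 : ℝ≥0∞) else 0) * (‖G q.1 q.2 ω‖₊ : ℝ≥0∞) ^ 2 ∂μ :=
          lintegral_congr hpoint
      _ = ∑ q : Equiv.Perm (Fin Ni) × Equiv.Perm (Fin Nj),
            ∫⁻ ω, (if (σi ω, σj ω) = q then (1 : ℝ≥0∞) else 0) *
              (‖G q.1 q.2 ω‖₊ : ℝ≥0∞) ^ 2 ∂μ := by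
          apply lintegral_finset_sum'
          intro q _
          exact (AEMeasurable.mul
            ((Measurable.ite (hBmeas q) measurable_const measurable_const).aemeasurable)
            (hGae q.1 q.2))
      _ = ∑ q : Equiv.Perm (Fin Ni) × Equiv.Perm (Fin Nj),
            (∫⁻ ω, (if (σi ω, σj ω) = q then (1 : ℝ≥0∞) else 0) ∂μ) *
              ∫⁻ ω, (‖G q.1 q.2 ω‖₊ : ℝ≥0∞) ^ 2 ∂μ := by
          apply Finset.sum_congr rfl
          intro q _
          exact lintegral_mul_eq_lintegral_mul_lintegral_of_indepFun'
            ((Measurable.ite (hBmeas q) measurable_const measurable_const).aemeasurable)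
            (hGae q.1 q.2) (hindepEF q)
      _ ≤ ∑ q : Equiv.Perm (Fin Ni) × Equiv.Perm (Fin Nj),
            ((Fintype.card (Equiv.Perm (Fin Ni)) : ℝ≥0∞) *
              (Fintype.card (Equiv.Perm (Fin Nj)) : ℝ≥0∞))⁻¹ * M ^ 2 := by
          apply Finset.sum_le_sum
          intro q _
          have hint : ∫⁻ ω, (if (σi ω, σj ω) = q then (1 : ℝ≥0∞) else 0) ∂μ =
              μ {ω | (σi ω, σj ω) = q} := by
            rw [← lintegral_indicator_one (hBmeas q)]
            apply lintegral_congr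
            intro ω
            simp [Set.indicator_apply]
          rw [hint, hBμ q]
          exact mul_le_mul_right (lintegral_sq_le_of_eLpNorm_le (hGbound q.1 q.2)) _
      _ = M ^ 2 := by
          rw [Finset.sum_const, Finset.card_univ, nsmul_eq_mul, ← mul_assoc, Fintype.card_prod,
            Nat.cast_mul, ENNReal.mul_inv_cancel
              (mul_ne_zero (by exact_mod_cast Fintype.card_ne_zero)
                (by exact_mod_cast Fintype.card_ne_zero))
              (ENNReal.mul_ne_top (ENNReal.natCast_ne_top _) (ENNReal.natCast_ne_top _)),
            one_mul]
  -- conclude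
  have hfin : eLpNorm (fun ω => G (σi ω) (σj ω) ω) 2 μ ≤ M :=
    eLpNorm_le_of_lintegral_sq_le hmain
  exact hfin
end

section
/- (Quadratic-root comparison for the error differential inequality.) Let r > 0, a ≥ 0, b ≥ 0, and let u : [0,∞) → ℝ be differentiable and nonnegative with u(0) = 0, satisfying the differential inequality u'(t) ≤ −r·u(t) + b·√(u(t)) + a for all t ≥ 0. Then for all t ≥ 0, √(u(t)) ≤ (b + √(b² + 4ra))/(2r), i.e. u(t)^{1/2} is bounded by the positive root of the quadratic equation −r z² + b z + a = 0. -/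
/-- **Quadratic-root comparison for the error differential
inequality.** Let `r > 0`, `a ≥ 0`, `b ≥ 0`, and let `u : [0,∞) → ℝ` be
nonnegative and differentiable (with derivative `u'`, one-sided at `0`) with
`u 0 = 0` and `u' t ≤ -r u t + b √(u t) + a` for all `t ≥ 0`. Then for all
`t ≥ 0`, `√(u t) ≤ (b + √(b² + 4 r a)) / (2 r)`, the positive root of
`-r z² + b z + a = 0`. -/
theorem sqrt_bound_of_differential_inequality
    (r a b : ℝ) (hr : 0 < r) (ha : 0 ≤ a) (hb : 0 ≤ b)
    (u u' : ℝ → ℝ)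
    (hderiv : ∀ t ∈ Set.Ici (0 : ℝ), HasDerivWithinAt u (u' t) (Set.Ici 0) t)
    (hnonneg : ∀ t ∈ Set.Ici (0 : ℝ), 0 ≤ u t)
    (hu0 : u 0 = 0)
    (hineq : ∀ t ∈ Set.Ici (0 : ℝ), u' t ≤ -r * u t + b * Real.sqrt (u t) + a) :
    ∀ t ∈ Set.Ici (0 : ℝ),
      Real.sqrt (u t) ≤ (b + Real.sqrt (b ^ 2 + 4 * r * a)) / (2 * r) := by
  intro t ht
  -- main estimate with a perturbation ε > 0
  have key : ∀ ε : ℝ, 0 < ε →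
      Real.sqrt (u t) ≤ (b + Real.sqrt (b ^ 2 + 4 * r * (a + ε))) / (2 * r) := by
    intro ε hε
    set s : ℝ := Real.sqrt (b ^ 2 + 4 * r * (a + ε)) with hs
    have harg : 0 ≤ b ^ 2 + 4 * r * (a + ε) := by positivity
    have hs2 : s ^ 2 = b ^ 2 + 4 * r * (a + ε) := Real.sq_sqrt harg
    have hs0 : 0 ≤ s := Real.sqrt_nonneg _
    set c : ℝ := (b + s) / (2 * r) with hc
    have hc0 : 0 ≤ c := by positivity
    have hroot : r * c ^ 2 = b * c + (a + ε) := by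
      rw [hc]
      field_simp
      nlinarith [hs2, congrArg (fun x => r * x) hs2]
    -- barrier argument on [0, t]
    have hbar : u t ≤ c ^ 2 := by
      have := image_le_of_deriv_right_lt_deriv_boundary'
        (f := u) (f' := u') (a := 0) (b := t)
        (B := fun _ => c ^ 2) (B' := fun _ => 0)
        (fun x hx => ((hderiv x hx.1).continuousWithinAt).mono
          (fun y hy => hy.1))
        (fun x hx => (hderiv x hx.1).mono (fun y hy => le_trans hx.1 hy))
        (by simp [hu0]; positivity)
        continuousOn_const
        (fun x hx => hasDerivWithinAt_const x _ _)
        ?_ (Set.mem_Icc.mpr ⟨ht, le_refl t⟩)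
      · exact this
      · intro x hx hux
        have hsq : Real.sqrt (u x) = c := by
          rw [hux, Real.sqrt_sq hc0]
        have h1 := hineq x hx.1
        rw [hux, Real.sqrt_sq hc0] at h1
        linarith [hroot]
    calc Real.sqrt (u t) ≤ Real.sqrt (c ^ 2) :=
          Real.sqrt_le_sqrt hbar
      _ = c := Real.sqrt_sq hc0
      _ = (b + s) / (2 * r) := rfl
  -- pass to the limit ε → 0
  refine le_of_forall_pos_le_add ?_
  intro δ hδ
  have h := key (r * δ ^ 2) (by positivity)
  set s1 : ℝ := Real.sqrt (b ^ 2 + 4 * r * a) with hs1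
  set s2 : ℝ := Real.sqrt (b ^ 2 + 4 * r * (a + r * δ ^ 2)) with hs2d
  have hs1sq : s1 ^ 2 = b ^ 2 + 4 * r * a := Real.sq_sqrt (by positivity)
  have hs2sq : s2 ^ 2 = b ^ 2 + 4 * r * (a + r * δ ^ 2) := Real.sq_sqrt (by positivity)
  have hs10 : 0 ≤ s1 := Real.sqrt_nonneg _
  have hs20 : 0 ≤ s2 := Real.sqrt_nonneg _
  have hcomp : s2 ≤ s1 + 2 * r * δ := by
    have h1 : b ^ 2 + 4 * r * (a + r * δ ^ 2) ≤ (s1 + 2 * r * δ) ^ 2 := by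
      nlinarith [hs1sq, mul_nonneg hs10 (mul_pos hr hδ).le]
    calc s2 ≤ Real.sqrt ((s1 + 2 * r * δ) ^ 2) := Real.sqrt_le_sqrt h1
      _ = s1 + 2 * r * δ := Real.sqrt_sq (by positivity)
  calc Real.sqrt (u t) ≤ (b + s2) / (2 * r) := h
    _ ≤ (b + (s1 + 2 * r * δ)) / (2 * r) := by
        apply div_le_div_of_nonneg_right ?_ (by positivity)
        linarith
    _ = (b + s1) / (2 * r) + δ := by field_simp; ring
end
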